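/- arXiv:1910.14369 — 7 statements merged into one kernel-verified Lean document; each statement's English description precedes it below -/
import Mathlib

section
/- Σ_{n≥0} (−1)^{⌈n/2⌉} (o_P(n) − e_P(n)) q^n = 1/((q; −q²)_∞ (−q²; −q²)_∞), where o_P(n) (resp. e_P(n)) is the number of partitions λ of n whose index ind_n(λ) is odd (resp. even), and the parity of ind_n(λ) equals the parity of (op(λ) + (n mod 2))/2 − 1. -/
open Finset

/-- The number of odd parts of a partition. -/
def Nat.Partition.op {n : ℕ} (p : n.Partition) : ℕ :=
  (p.parts.filter (fun x => Odd x)).card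

/-- A representative of the parity of the index `ind_n(λ)` of a partition `λ` of `n`:
`ind(λ) ≡ (op(λ) + op((n)))/2 - 1 (mod 2)` where `op((n)) = n % 2`. -/
def pind (n : ℕ) (p : n.Partition) : ℤ := ((p.op : ℤ) + ((n % 2 : ℕ) : ℤ)) / 2 - 1

/-- The number of partitions of `n` lying in `S` with odd index. -/
def oCount (S : Set (Multiset ℕ)) [DecidablePred (· ∈ S)] (n : ℕ) : ℕ :=
  (univ.filter (fun p : n.Partition => p.parts ∈ S ∧ Odd (pind n p))).card

/-- The number of partitions of `n` lying in `S` with even index. -/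
def eCount (S : Set (Multiset ℕ)) [DecidablePred (· ∈ S)] (n : ℕ) : ℕ :=
  (univ.filter (fun p : n.Partition => p.parts ∈ S ∧ Even (pind n p))).card

/-- The set of all partitions (as multisets of parts). -/
def allParts : Set (Multiset ℕ) := Set.univ

instance : DecidablePred (· ∈ allParts) := fun _ => Decidable.isTrue trivial

namespace ParityGFAux

open PowerSeries

/-- The weight of a part of size `k`. -/
def w (k : ℕ) : ℤ := (-1) ^ (k / 2)

/-- The weighted geometric series `Σ_j (w k)^j X^(k*j)`, the inverse of `1 - (w k) X^k`. -/
noncomputable def geom (k : ℕ) : PowerSeries ℤ :=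
  PowerSeries.mk fun m => if k ∣ m then (w k) ^ (m / k) else 0

theorem geom_mul {k : ℕ} (hk : 0 < k) : (1 - C (w k) * X ^ k) * geom k = 1 := by
  ext n
  have h1 : coeff n ((1 - C (w k) * X ^ k) * geom k)
      = coeff n (geom k) - w k * (if k ≤ n then coeff (n - k) (geom k) else 0) := by
    rw [sub_mul, one_mul, map_sub, mul_assoc, coeff_C_mul,
      mul_comm (X ^ k : PowerSeries ℤ), coeff_mul_X_pow']
  rw [h1, coeff_one]
  simp only [geom, coeff_mk]
  rcases Nat.eq_zero_or_pos n with rfl | hn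
  · rw [if_pos (dvd_zero k), if_neg (by omega), if_pos rfl, Nat.zero_div, pow_zero]
    ring
  · rw [if_neg hn.ne']
    by_cases hd : k ∣ n
    · obtain ⟨q, rfl⟩ := hd
      have hq : 0 < q := by
        rcases Nat.eq_zero_or_pos q with rfl | h; · simp at hn
        · exact h
      have hle : k ≤ k * q := Nat.le_mul_of_pos_right k hq
      rw [if_pos ⟨q, rfl⟩, if_pos hle, if_pos (by exact ⟨q - 1, by rw [Nat.mul_sub_one]⟩)]
      have e1 : k * q / k = q := Nat.mul_div_cancel_left q hk
      have e2 : (k * q - k) / k = q - 1 := by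
        rw [show k * q - k = k * (q - 1) by rw [Nat.mul_sub_one]]
        exact Nat.mul_div_cancel_left _ hk
      rw [e1, e2]
      have : w k * w k ^ (q - 1) = w k ^ q := by
        rw [← pow_succ']
        congr 1
        omega
      rw [this]
      ring
    · rw [if_neg hd]
      split_ifs with h1 h2
      · exfalso
        apply hd
        have h3 : n - k + k = n := Nat.sub_add_cancel h1
        exact h3 ▸ Dvd.dvd.add h2 dvd_rfl
      · ring
      · ring

/-- Weighted version of the Euler generating-function lemma: the `n`-th coefficient of the
product of the weighted geometric series over `s` is the weighted count of partitions of `n`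
with all parts in `s`. -/
theorem weighted_gf (n : ℕ) (s : Finset ℕ) (hs : ∀ i ∈ s, 0 < i) :
    coeff n (∏ k ∈ s, geom k) =
      ∑ p ∈ univ.filter (fun p : n.Partition => ∀ j ∈ p.parts, j ∈ s),
        ∏ k ∈ s, w k ^ (p.parts.count k) := by
  classical
  simp_rw [coeff_prod, geom, coeff_mk, Finset.prod_ite_zero]
  rw [Finset.sum_ite, Finset.sum_const_zero, add_zero]
  symm
  refine Finset.sum_bij (fun (p : n.Partition) _ =>
    (⟨Finset.filter (fun i => i ≠ 0) p.parts.toFinset, fun i => p.parts.count i * i,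
      fun a => by
        simp only [ne_eq, mul_eq_zero, Multiset.count_eq_zero]
        rw [not_or, not_not]
        simp only [Multiset.mem_toFinset, not_not, mem_filter]⟩ : ℕ →₀ ℕ))
    ?_ ?_ ?_ ?_
  · -- maps into filter
    intro p hp
    simp only [mem_filter, mem_univ, true_and] at hp
    simp only [mem_filter, mem_finsuppAntidiag, Finsupp.coe_mk]
    refine ⟨⟨?_, ?_⟩, ?_⟩
    · have hsub : p.parts.toFinset ⊆ s := fun i hi => hp i (Multiset.mem_toFinset.mp hi)
      have := Finset.sum_multiset_count_of_subset p.parts s hsub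
      rw [p.parts_sum] at this
      simpa [smul_eq_mul] using this.symm
    · intro i hi
      simp only [ne_eq, mem_filter, Multiset.mem_toFinset] at hi
      exact hp i hi.1
    · intro k _
      exact Dvd.intro_left _ rfl
  · -- injective
    intro p₁ hp₁ p₂ hp₂ h
    apply Nat.Partition.ext
    simp only [mem_filter, mem_univ, true_and] at hp₁ hp₂
    ext i
    simp only [ne_eq, Finsupp.mk.injEq] at h
    by_cases hi : i = 0
    · rw [hi, Multiset.count_eq_zero_of_notMem, Multiset.count_eq_zero_of_notMem]
      · intro a; exact Nat.lt_irrefl 0 (hs 0 (hp₂ 0 a))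
      · intro a; exact Nat.lt_irrefl 0 (hs 0 (hp₁ 0 a))
    · rw [← mul_left_inj' hi]
      rw [funext_iff] at h
      exact h.2 i
  · -- surjective
    rintro f hf
    simp only [mem_filter, mem_finsuppAntidiag] at hf
    obtain ⟨⟨hsum, hsupp⟩, hdvd⟩ := hf
    refine ⟨⟨∑ i ∈ s, Multiset.replicate (f i / i) i, ?_, ?_⟩, mem_filter.mpr ⟨mem_univ _, ?_⟩, ?_⟩
    · intro i hi
      simp only [Multiset.mem_sum] at hi
      rcases hi with ⟨t, ht, z⟩
      rw [Multiset.eq_of_mem_replicate z]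
      exact hs t ht
    · simp_rw [Multiset.sum_sum, Multiset.sum_replicate, Nat.nsmul_eq_mul]
      rw [← hsum]
      exact Finset.sum_congr rfl fun i hi => Nat.div_mul_cancel (hdvd i hi)
    · intro j hj
      simp only [Multiset.mem_sum] at hj
      rcases hj with ⟨t, ht, z⟩
      rwa [Multiset.eq_of_mem_replicate z]
    · ext i
      simp only [Finsupp.coe_mk]
      simp_rw [Multiset.count_sum', Multiset.count_replicate, Finset.sum_ite_eq']
      split_ifs with h
      · exact Nat.div_mul_cancel (hdvd i h)
      · rw [zero_mul]
        symm
        rw [← Finsupp.notMem_support_iff]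
        exact fun hmem => h (hsupp hmem)
  · -- values
    intro p hp
    refine Finset.prod_congr rfl fun k hk => ?_
    simp only [Finsupp.coe_mk]
    rw [Nat.mul_div_cancel _ (hs k hk)]

theorem prod_pair {M₀ : Type*} [CommMonoid M₀] (f : ℕ → M₀) :
    ∀ M : ℕ, ∏ j ∈ range M, (f (2*j+1) * f (2*j+2)) = ∏ k ∈ Icc 1 (2*M), f k
  | 0 => by simp
  | (M+1) => by
    rw [prod_range_succ, prod_pair f M, show 2*(M+1) = (2*M+1)+1 by ring,
      prod_Icc_succ_top (by omega), prod_Icc_succ_top (by omega), mul_assoc]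

theorem factor_odd (j : ℕ) :
    (1 - (-1 : PowerSeries ℤ) ^ j * X ^ (2 * j + 1)) = 1 - C (w (2*j+1)) * X ^ (2*j+1) := by
  have h1 : w (2*j+1) = (-1)^j := by rw [w, show (2*j+1)/2 = j by omega]
  rw [h1]
  congr 2
  rw [map_pow, map_neg, map_one]

theorem factor_even (j : ℕ) :
    (1 + (-1 : PowerSeries ℤ) ^ j * X ^ (2 * j + 2)) = 1 - C (w (2*j+2)) * X ^ (2*j+2) := by
  have h1 : w (2*j+2) = (-1)^(j+1) := by rw [w, show (2*j+2)/2 = j+1 by omega]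
  rw [h1, map_pow, map_neg, map_one, pow_succ]
  ring

theorem prod_eq (n : ℕ) :
    (∏ j ∈ range (n + 1),
      ((1 - (-1 : PowerSeries ℤ) ^ j * X ^ (2 * j + 1)) *
        (1 + (-1 : PowerSeries ℤ) ^ j * X ^ (2 * j + 2)))) =
    ∏ k ∈ Icc 1 (2*(n+1)), (1 - C (w k) * X ^ k) := by
  rw [← prod_pair (fun k => 1 - C (w k) * X ^ k) (n+1)]
  exact Finset.prod_congr rfl fun j _ => by rw [factor_odd, factor_even]

theorem negpow (x y : ℕ) (h : x % 2 = y % 2) : (-1:ℤ)^x = (-1)^y := by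
  conv_lhs => rw [← Nat.div_add_mod x 2]
  conv_rhs => rw [← Nat.div_add_mod y 2]
  rw [pow_add, pow_add, pow_mul, pow_mul]
  norm_num [h]

/-- The combinatorial heart: the coefficient of the signed parity-count series equals the
weighted partition count. -/
theorem coeff_A (m N : ℕ) (h : m ≤ N) :
    (-1:ℤ)^((m+1)/2) * ((oCount allParts m : ℤ) - eCount allParts m) =
      ∑ p : m.Partition, ∏ k ∈ Icc 1 N, w k ^ (p.parts.count k) := by
  classical
  have ho : oCount allParts m = (univ.filter (fun p : m.Partition => Odd (pind m p))).card := by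
    unfold oCount
    congr 1
    apply Finset.filter_congr
    intro p _
    simp [allParts]
  have he : eCount allParts m
      = (univ.filter (fun p : m.Partition => ¬ Odd (pind m p))).card := by
    unfold eCount
    congr 1
    apply Finset.filter_congr
    intro p _
    simp only [allParts, Set.mem_univ, true_and]
    exact Int.not_odd_iff_even.symm
  have key : ((oCount allParts m : ℤ) - eCount allParts m)
      = ∑ p : m.Partition, (if Odd (pind m p) then (1:ℤ) else -1) := by
    rw [Finset.sum_ite, Finset.sum_const, Finset.sum_const, ho, he]
    simp [sub_eq_add_neg]
  rw [key, Finset.mul_sum]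
  apply Finset.sum_congr rfl
  intro p _
  have hsub : p.parts.toFinset ⊆ Icc 1 N := by
    intro j hj
    rw [Multiset.mem_toFinset] at hj
    rw [mem_Icc]
    refine ⟨p.parts_pos hj, le_trans ?_ h⟩
    rw [← p.parts_sum]
    exact Multiset.single_le_sum (fun x _ => Nat.zero_le x) j hj
  have hA : ∑ k ∈ Icc 1 N, p.parts.count k * k = m := by
    have := Finset.sum_multiset_count_of_subset p.parts (Icc 1 N) hsub
    rw [p.parts_sum] at this
    simpa [smul_eq_mul] using this.symm
  have hB : ∑ k ∈ Icc 1 N, (k % 2) * p.parts.count k = p.op := by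
    rw [Nat.Partition.op, ← Multiset.toFinset_sum_count_eq]
    have hsub2 : (p.parts.filter (fun x => Odd x)).toFinset ⊆ Icc 1 N := by
      intro j hj
      rw [Multiset.mem_toFinset, Multiset.mem_filter] at hj
      exact hsub (Multiset.mem_toFinset.mpr hj.1)
    rw [Finset.sum_subset hsub2 (fun k _ hk =>
      Multiset.count_eq_zero_of_notMem (fun hm => hk (Multiset.mem_toFinset.mpr hm)))]
    apply Finset.sum_congr rfl
    intro k _
    rw [Multiset.count_filter]
    by_cases hodd : Odd k
    · rw [if_pos hodd, Nat.odd_iff.mp hodd, one_mul]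
    · rw [if_neg hodd]
      have : k % 2 = 0 := Nat.even_iff.mp (Nat.not_odd_iff_even.mp hodd)
      rw [this, zero_mul]
  set T := ∑ k ∈ Icc 1 N, (k / 2) * p.parts.count k with hT
  have hm' : 2 * T + p.op = ∑ k ∈ Icc 1 N, p.parts.count k * k := by
    rw [← hB, hT, Finset.mul_sum, ← Finset.sum_add_distrib]
    apply Finset.sum_congr rfl
    intro k _
    have h2 : 2 * (k / 2) + k % 2 = k := by omega
    calc 2 * (k / 2 * p.parts.count k) + k % 2 * p.parts.count k
        = (2 * (k/2) + k % 2) * p.parts.count k := by ring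
      _ = p.parts.count k * k := by rw [h2]; ring
  have hm : m = 2 * T + p.op := by omega
  have hRHS : ∏ k ∈ Icc 1 N, w k ^ (p.parts.count k) = (-1:ℤ)^T := by
    rw [hT, ← Finset.prod_pow_eq_pow_sum]
    exact Finset.prod_congr rfl fun k _ => by rw [w, ← pow_mul]
  rw [hRHS]
  set c := (p.op + m % 2) / 2 with hc
  have hceq : p.op + m % 2 = 2 * c := by omega
  have hpind : pind m p = (c : ℤ) - 1 := by
    rw [pind]
    have : ((p.op : ℤ) + ((m % 2 : ℕ) : ℤ)) = 2 * (c : ℤ) := by push_cast; omega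
    rw [this]
    omega
  by_cases hodd : Odd (pind m p)
  · rw [if_pos hodd, mul_one]
    rw [hpind, Int.odd_iff] at hodd
    apply negpow
    omega
  · rw [if_neg hodd, mul_neg_one]
    rw [hpind, Int.odd_iff] at hodd
    rw [show -(-1:ℤ)^((m+1)/2) = (-1)^((m+1)/2+1) by rw [pow_succ]; ring]
    apply negpow
    omega

theorem coeff_G (m N : ℕ) (h : m ≤ N) :
    coeff m (∏ k ∈ Icc 1 N, geom k) =
      ∑ p : m.Partition, ∏ k ∈ Icc 1 N, w k ^ (p.parts.count k) := by
  rw [weighted_gf m _ (fun i hi => (mem_Icc.mp hi).1)]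
  apply Finset.sum_congr _ (fun _ _ => rfl)
  rw [Finset.filter_true_of_mem]
  intro p _ j hj
  rw [mem_Icc]
  refine ⟨p.parts_pos hj, le_trans ?_ h⟩
  rw [← p.parts_sum]
  exact Multiset.single_le_sum (fun x _ => Nat.zero_le x) j hj

end ParityGFAux

/-- `Σ_n (-1)^{⌈n/2⌉}(o_P(n) - e_P(n)) q^n = 1/((q;-q²)_∞(-q²;-q²)_∞)`: for each `n`, the
coefficient of `q^n` in the left-hand side multiplied by
`Π_{j≤n} (1 - (-1)^j q^{2j+1})(1 + (-1)^j q^{2j+2})` is `1` if `n = 0` and `0` otherwise. -/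
theorem parity_gf_all :
    ∀ n : ℕ, PowerSeries.coeff n
      ((PowerSeries.mk fun m =>
          (-1 : ℤ) ^ ((m + 1) / 2) * ((oCount allParts m : ℤ) - (eCount allParts m : ℤ))) *
        ∏ j ∈ range (n + 1),
          ((1 - (-1 : PowerSeries ℤ) ^ j * PowerSeries.X ^ (2 * j + 1)) *
            (1 + (-1 : PowerSeries ℤ) ^ j * PowerSeries.X ^ (2 * j + 2))))
      = if n = 0 then 1 else 0 := by
  intro n
  open ParityGFAux PowerSeries in
  rw [ParityGFAux.prod_eq n]
  set N := 2 * (n + 1) with hN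
  have hFG : (∏ k ∈ Icc 1 N, (1 - PowerSeries.C (ParityGFAux.w k) * PowerSeries.X ^ k)) *
      (∏ k ∈ Icc 1 N, ParityGFAux.geom k) = 1 := by
    rw [← Finset.prod_mul_distrib]
    apply Finset.prod_eq_one
    intro k hk
    exact ParityGFAux.geom_mul (mem_Icc.mp hk).1
  have step : PowerSeries.coeff n
      ((PowerSeries.mk fun m =>
          (-1 : ℤ) ^ ((m + 1) / 2) * ((oCount allParts m : ℤ) - (eCount allParts m : ℤ))) *
        ∏ k ∈ Icc 1 N, (1 - PowerSeries.C (ParityGFAux.w k) * PowerSeries.X ^ k))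
      = PowerSeries.coeff n ((∏ k ∈ Icc 1 N, ParityGFAux.geom k) *
        ∏ k ∈ Icc 1 N, (1 - PowerSeries.C (ParityGFAux.w k) * PowerSeries.X ^ k)) := by
    rw [PowerSeries.coeff_mul, PowerSeries.coeff_mul]
    apply Finset.sum_congr rfl
    rintro ⟨i, j⟩ hij
    rw [Finset.HasAntidiagonal.mem_antidiagonal] at hij
    have hi : i ≤ N := by omega
    congr 1
    rw [PowerSeries.coeff_mk, ParityGFAux.coeff_A i N hi, ParityGFAux.coeff_G i N hi]
  rw [step, mul_comm, hFG, PowerSeries.coeff_one]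
end

section
/- Σ_{n≥0} (−1)^{⌈n/2⌉} (o_D(n) − e_D(n)) q^n = (−q; −q²)_∞ (q²; −q²)_∞, where D is the set of partitions into distinct parts and o_D(n) (resp. e_D(n)) counts λ ∈ D with λ ⊢ n whose index parity — the parity of (op(λ) + (n mod 2))/2 − 1 — is odd (resp. even). -/
open Finset

/-- The set of partitions into distinct parts. -/
def distinctParts : Set (Multiset ℕ) := {s | s.Nodup}

instance : DecidablePred (· ∈ distinctParts) := fun s => by
  unfold distinctParts; exact inferInstanceAs (Decidable s.Nodup)

/-- Coefficient extraction for finite products of `1 + c_k X^k`. -/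
lemma coeff_prod_one_add (c : ℕ → ℤ) (A : Finset ℕ) (n : ℕ) :
    PowerSeries.coeff n (∏ k ∈ A, (1 + PowerSeries.C (R := ℤ) (c k) * PowerSeries.X ^ k))
      = ∑ S ∈ A.powerset, (if ∑ k ∈ S, k = n then ∏ k ∈ S, c k else 0) := by
  induction A using Finset.induction_on generalizing n with
  | empty =>
      simp [PowerSeries.coeff_one, eq_comm]
      congr
  | insert a s ha ih =>
      rw [Finset.prod_insert ha, Finset.sum_powerset_insert ha]
      have expand : (1 + PowerSeries.C (R := ℤ) (c a) * PowerSeries.X ^ a) *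
          (∏ k ∈ s, (1 + PowerSeries.C (R := ℤ) (c k) * PowerSeries.X ^ k))
          = (∏ k ∈ s, (1 + PowerSeries.C (R := ℤ) (c k) * PowerSeries.X ^ k))
            + PowerSeries.C (R := ℤ) (c a) *
              ((∏ k ∈ s, (1 + PowerSeries.C (R := ℤ) (c k) * PowerSeries.X ^ k)) * PowerSeries.X ^ a) := by
        ring
      rw [expand, map_add, PowerSeries.coeff_C_mul, PowerSeries.coeff_mul_X_pow', ih]
      congr 1
      by_cases hle : a ≤ n
      · simp only [if_pos hle, ih, Finset.mul_sum]
        refine Finset.sum_congr rfl fun S hS => ?_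
        have haS : a ∉ S := fun h => ha (Finset.mem_powerset.mp hS h)
        rw [Finset.sum_insert haS, Finset.prod_insert haS]
        by_cases h1 : ∑ k ∈ S, k = n - a
        · rw [if_pos h1, if_pos (by omega)]
        · rw [if_neg h1, if_neg (by omega), mul_zero]
      · rw [if_neg hle, mul_zero]
        refine (Finset.sum_eq_zero fun S hS => ?_).symm
        have haS : a ∉ S := fun h => ha (Finset.mem_powerset.mp hS h)
        rw [Finset.sum_insert haS, if_neg (by omega)]

/-- Reindexing the truncated double product as a single product. -/
lemma prod_reindex (m : ℕ) :
    (∏ j ∈ range m,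
        ((1 + (-1 : PowerSeries ℤ) ^ j * PowerSeries.X ^ (2 * j + 1)) *
          (1 - (-1 : PowerSeries ℤ) ^ j * PowerSeries.X ^ (2 * j + 2))))
      = ∏ k ∈ Icc 1 (2 * m), (1 + PowerSeries.C (R := ℤ) ((-1) ^ (k / 2)) * PowerSeries.X ^ k) := by
  induction m with
  | zero => simp
  | succ m ih =>
      rw [Finset.prod_range_succ, ih]
      have h1 : 2 * (m + 1) = (2 * m + 1) + 1 := by ring
      rw [h1, Finset.prod_Icc_succ_top (by omega), Finset.prod_Icc_succ_top (by omega)]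
      have hC : (-1 : PowerSeries ℤ) ^ m = PowerSeries.C (R := ℤ) ((-1) ^ m) := by
        rw [map_pow, map_neg, map_one]
      have hA : (1 + (-1 : PowerSeries ℤ) ^ m * PowerSeries.X ^ (2 * m + 1))
          = 1 + PowerSeries.C (R := ℤ) ((-1) ^ ((2 * m + 1) / 2)) * PowerSeries.X ^ (2 * m + 1) := by
        have e1 : (2 * m + 1) / 2 = m := by omega
        rw [e1, hC]
      have hB : (1 - (-1 : PowerSeries ℤ) ^ m * PowerSeries.X ^ (2 * m + 2))
          = 1 + PowerSeries.C (R := ℤ) ((-1) ^ ((2 * m + 1 + 1) / 2)) * PowerSeries.X ^ (2 * m + 1 + 1) := by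
        have e2 : (2 * m + 1 + 1) / 2 = m + 1 := by omega
        have e3 : 2 * m + 1 + 1 = 2 * m + 2 := by omega
        have e4 : PowerSeries.C (R := ℤ) ((-1 : ℤ) ^ (m + 1)) = - PowerSeries.C (R := ℤ) ((-1) ^ m) := by
          rw [pow_succ, map_mul, map_neg, map_one, mul_neg, mul_one]
        rw [e2, e3, e4, hC]
        ring
      rw [hA, hB]
      ring

/-- The bijection between subsets of `[1, 2n+2]` summing to `n` and distinct partitions. -/
lemma sum_bij_step (n : ℕ) :
    ∑ S ∈ (Icc 1 (2 * (n + 1))).powerset,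
        (if ∑ k ∈ S, k = n then ∏ k ∈ S, ((-1 : ℤ)) ^ (k / 2) else 0)
      = ∑ p ∈ univ.filter (fun p : n.Partition => p.parts.Nodup),
          ∏ k ∈ p.parts.toFinset, ((-1 : ℤ)) ^ (k / 2) := by
  rw [← Finset.sum_filter]
  refine Finset.sum_bij'
    (i := fun S hS => (⟨S.val, ?_, ?_⟩ : n.Partition))
    (j := fun p hp => p.parts.toFinset) ?_ ?_ ?_ ?_ ?_
  · intro i hi
    simp only [Finset.mem_filter, Finset.mem_powerset] at hS
    have := hS.1 hi
    rw [Finset.mem_Icc] at this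
    omega
  · simp only [Finset.mem_filter, Finset.mem_powerset] at hS
    have : S.val.sum = ∑ k ∈ S, k := by
      rw [← Finset.sum_map_val, Multiset.map_id']
    rw [this, hS.2]
  · intro S hS
    simp only [Finset.mem_filter, Finset.mem_univ, true_and]
    exact S.nodup
  · intro p hp
    simp only [Finset.mem_filter, Finset.mem_univ, true_and] at hp
    simp only [Finset.mem_filter, Finset.mem_powerset]
    constructor
    · intro k hk
      rw [Multiset.mem_toFinset] at hk
      rw [Finset.mem_Icc]
      refine ⟨p.parts_pos hk, ?_⟩
      have h1 : k ≤ p.parts.sum := Multiset.single_le_sum (fun x _ => Nat.zero_le x) k hk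
      rw [p.parts_sum] at h1
      omega
    · have hv : p.parts.toFinset.val = p.parts := Multiset.dedup_eq_self.mpr hp
      rw [← Finset.sum_map_val, hv, Multiset.map_id', p.parts_sum]
  · intro S hS
    ext k
    rw [Multiset.mem_toFinset]
    exact Iff.rfl
  · intro p hp
    simp only [Finset.mem_filter, Finset.mem_univ, true_and] at hp
    ext1
    simp [Multiset.dedup_eq_self.mpr hp]
  · intro S hS
    apply Finset.prod_congr _ (fun _ _ => rfl)
    ext k
    rw [Multiset.mem_toFinset]
    exact Iff.rfl

/-- The sign identity for a single distinct partition. -/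
lemma term_sign (n : ℕ) (p : n.Partition) (hp : p.parts.Nodup) :
    (-1 : ℤ) ^ ((n + 1) / 2) * (if Odd (pind n p) then (1 : ℤ) else -1)
      = ∏ k ∈ p.parts.toFinset, ((-1 : ℤ)) ^ (k / 2) := by
  set S := p.parts.toFinset with hSdef
  have hv : S.val = p.parts := Multiset.dedup_eq_self.mpr hp
  set D := ∑ k ∈ S, k / 2 with hD
  set m := p.op with hm
  -- sum of parts over the finset is n
  have hsum : ∑ k ∈ S, k = n := by
    rw [← Finset.sum_map_val, hv, Multiset.map_id', p.parts_sum]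
  -- op equals the number of odd elements of S
  have hop : m = (S.filter (fun k => Odd k)).card := by
    rw [hm, Nat.Partition.op]
    have : (S.filter (fun k => Odd k)).val = p.parts.filter (fun k => Odd k) := by
      rw [Finset.filter_val, hv]
    rw [← this]
    rfl
  have hmod : ∑ k ∈ S, k % 2 = m := by
    rw [hop, Finset.card_filter]
    refine Finset.sum_congr rfl fun k _ => ?_
    rcases Nat.even_or_odd k with hk | hk
    · rw [if_neg (Nat.not_odd_iff_even.mpr hk), Nat.even_iff.mp hk]
    · rw [if_pos hk, Nat.odd_iff.mp hk]
  have key : 2 * D + m = n := by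
    rw [hD, ← hmod, ← hsum, Finset.mul_sum, ← Finset.sum_add_distrib]
    exact Finset.sum_congr rfl fun k _ => by omega
  -- compute the parity of pind
  have hpind : pind n p = (((m + n % 2) / 2 : ℕ) : ℤ) - 1 := by
    have hcast : ((m : ℤ) + ((n % 2 : ℕ) : ℤ)) = ((m + n % 2 : ℕ) : ℤ) := by push_cast; ring
    rw [pind, ← hm, hcast]
    norm_cast
  set e := (m + n % 2) / 2 with he
  have hiff : Odd (pind n p) ↔ Even e := by
    rw [hpind]
    rw [Int.odd_iff, Nat.even_iff]
    omega
  have hite : (if Odd (pind n p) then (1 : ℤ) else -1) = (-1) ^ e := by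
    by_cases hev : Even e
    · rw [if_pos (hiff.mpr hev), hev.neg_one_pow]
    · rw [if_neg (fun h => hev (hiff.mp h)), (Nat.not_even_iff_odd.mp hev).neg_one_pow]
  have hprod : ∏ k ∈ S, ((-1 : ℤ)) ^ (k / 2) = (-1) ^ D := by
    rw [hD, Finset.prod_pow_eq_pow_sum]
  rw [hite, hprod, ← pow_add]
  have harith : (n + 1) / 2 + e = D + 2 * (m / 2 + n % 2) := by
    rw [he]; omega
  rw [harith, pow_add, pow_mul]
  norm_num

/-- Difference of counts as a signed sum. -/
lemma count_eq (n : ℕ) :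
    ((oCount distinctParts n : ℤ) - (eCount distinctParts n : ℤ))
      = ∑ p ∈ univ.filter (fun p : n.Partition => p.parts.Nodup),
          (if Odd (pind n p) then (1 : ℤ) else -1) := by
  rw [Finset.sum_ite, Finset.sum_const, Finset.sum_const, Finset.filter_filter,
    Finset.filter_filter]
  rw [oCount, eCount]
  have h1 : (univ.filter (fun p : n.Partition => p.parts ∈ distinctParts ∧ Odd (pind n p)))
      = univ.filter (fun p : n.Partition => p.parts.Nodup ∧ Odd (pind n p)) := by
    apply Finset.filter_congr
    intro p _
    exact and_congr Iff.rfl Iff.rfl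
  have h2 : (univ.filter (fun p : n.Partition => p.parts ∈ distinctParts ∧ Even (pind n p)))
      = univ.filter (fun p : n.Partition => p.parts.Nodup ∧ ¬Odd (pind n p)) := by
    apply Finset.filter_congr
    intro p _
    exact and_congr Iff.rfl Int.not_odd_iff_even.symm
  rw [h1, h2]
  simp [sub_eq_add_neg]

/-- `Σ_n (-1)^{⌈n/2⌉}(o_D(n) - e_D(n)) q^n = (-q;-q²)_∞(q²;-q²)_∞`: for each `n`, the
coefficient of `q^n` of the left-hand side agrees with that of the truncated product
`Π_{j≤n} (1 + (-1)^j q^{2j+1})(1 - (-1)^j q^{2j+2})`. -/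
theorem parity_gf_distinct :
    ∀ n : ℕ, PowerSeries.coeff n
        (PowerSeries.mk fun m =>
          (-1 : ℤ) ^ ((m + 1) / 2) *
            ((oCount distinctParts m : ℤ) - (eCount distinctParts m : ℤ)))
      = PowerSeries.coeff n
          (∏ j ∈ range (n + 1),
            ((1 + (-1 : PowerSeries ℤ) ^ j * PowerSeries.X ^ (2 * j + 1)) *
              (1 - (-1 : PowerSeries ℤ) ^ j * PowerSeries.X ^ (2 * j + 2)))) := by
  intro n
  rw [PowerSeries.coeff_mk, prod_reindex (n + 1),
    coeff_prod_one_add (fun k => (-1 : ℤ) ^ (k / 2)) (Icc 1 (2 * (n + 1))) n,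
    sum_bij_step, count_eq, Finset.mul_sum]
  exact Finset.sum_congr rfl fun p hp =>
    term_sign n p (by simpa using (Finset.mem_filter.mp hp).2)
end

section
/- For each d ≥ 1, let O^d be the set of partitions all of whose parts are ≡ ±1 (mod 4d). Then Σ_{n≥0} (−1)^{⌈n/2⌉} (o_{O^d}(n) − e_{O^d}(n)) q^n = 1/((q; q^{4d})_∞ (−q^{4d−1}; q^{4d})_∞), where o (resp. e) counts partitions in O^d of n whose index parity — parity of (op(λ) + (n mod 2))/2 − 1 — is odd (resp. even). -/
open Finset

/-- The set of partitions all of whose parts are `≡ ±1 (mod 4d)`. -/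
def OParts (d : ℕ) : Set (Multiset ℕ) :=
  {s | ∀ x ∈ s, x % (4 * d) = 1 ∨ x % (4 * d) = 4 * d - 1}

instance (d : ℕ) : DecidablePred (· ∈ OParts d) := fun s => by
  unfold OParts
  exact inferInstanceAs (Decidable (∀ x ∈ s, x % (4 * d) = 1 ∨ x % (4 * d) = 4 * d - 1))

namespace ParityGF

open PowerSeries


/-- Geometric-type series inverse to `1 - ε X^i`. -/
noncomputable def geom (i : ℕ) (ε : ℤ) : PowerSeries ℤ :=
  PowerSeries.mk fun m => if i ∣ m then ε ^ (m / i) else 0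

lemma geom_mul (i : ℕ) (hi : 0 < i) (ε : ℤ) :
    (1 - PowerSeries.C ε * X ^ i) * geom i ε = 1 := by
  ext n
  rw [sub_mul, one_mul, map_sub, mul_assoc, coeff_C_mul, coeff_X_pow_mul']
  rcases n with _ | n
  · simp [geom, coeff_mk, hi.ne']
  · simp only [geom, coeff_mk, coeff_one, Nat.succ_ne_zero, if_false]
    by_cases hle : i ≤ n + 1
    · rw [if_pos hle]
      by_cases hdvd : i ∣ n + 1
      · obtain ⟨k, hk⟩ := hdvd
        have hk0 : k ≠ 0 := by rintro rfl; simp at hk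
        obtain ⟨j, rfl⟩ : ∃ j, k = j + 1 := ⟨k - 1, by omega⟩
        rw [mul_add, mul_one] at hk
        have h1 : n + 1 - i = i * j := by omega
        have h2 : (n + 1) / i = j + 1 := by
          rw [hk, show i * j + i = i * (j + 1) by ring, Nat.mul_div_cancel_left _ hi]
        have h3 : (n + 1 - i) / i = j := by rw [h1, Nat.mul_div_cancel_left _ hi]
        rw [if_pos ⟨j + 1, by rw [mul_add, mul_one, ← hk]⟩, if_pos ⟨j, h1⟩, h2, h3,
          pow_succ', sub_self]
      · have hd2 : ¬ i ∣ n + 1 - i := by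
          rintro ⟨c, hc⟩
          exact hdvd ⟨c + 1, by rw [mul_add, mul_one, ← hc]; omega⟩
        rw [if_neg hdvd, if_neg hd2, mul_zero, sub_self]
    · have hd : ¬ i ∣ n + 1 := fun h => hle (Nat.le_of_dvd (by omega) h)
      rw [if_neg hle, if_neg hd, mul_zero, sub_self]

lemma neg_one_pow_mod (x y : ℕ) (h : x % 2 = y % 2) : (-1 : ℤ) ^ x = (-1) ^ y := by
  conv_lhs => rw [← Nat.div_add_mod x 2, pow_add, pow_mul, neg_one_sq, one_pow, one_mul]
  conv_rhs => rw [← Nat.div_add_mod y 2, pow_add, pow_mul, neg_one_sq, one_pow, one_mul]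
  rw [h]

lemma sign_arith (m a b : ℕ) (h4 : (m + b) % 4 = a % 4) :
    (-1 : ℤ) ^ ((m + 1) / 2) *
      (if Odd ((((a : ℤ) + b) + ((m % 2 : ℕ) : ℤ)) / 2 - 1) then (1 : ℤ) else -1) =
    (-1) ^ b := by
  obtain ⟨t, ht⟩ : ∃ t, a + b + m % 2 = 2 * t := ⟨(a + b + m % 2) / 2, by omega⟩
  have he : (((a : ℤ) + b) + ((m % 2 : ℕ) : ℤ)) / 2 - 1 = (t : ℤ) - 1 := by
    have : ((a : ℤ) + b) + ((m % 2 : ℕ) : ℤ) = 2 * t := by exact_mod_cast ht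
    omega
  rw [he]
  have hodd : Odd ((t : ℤ) - 1) ↔ t % 2 = 0 := by
    constructor
    · rintro ⟨k, hk⟩; omega
    · intro h; exact ⟨(t : ℤ) / 2 - 1, by omega⟩
  by_cases h : t % 2 = 0
  · rw [if_pos (hodd.mpr h), mul_one]
    exact neg_one_pow_mod _ _ (by omega)
  · rw [if_neg (fun hc => h (hodd.mp hc))]
    rw [mul_neg_one, ← neg_one_mul, ← pow_succ']
    exact neg_one_pow_mod _ _ (by omega)

lemma weightedGF_prop (n : ℕ) (s : Finset ℕ) (hs : ∀ i ∈ s, 0 < i) (w : ℕ → ℤ) :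
    (∑ p ∈ univ.filter (fun p : n.Partition => ∀ j ∈ p.parts, j ∈ s),
        ∏ i ∈ s, w i ^ (p.parts.count i)) =
      coeff (R := ℤ) n (∏ i ∈ s, geom i (w i)) := by
  classical
  rw [coeff_prod]
  simp only [geom, coeff_mk]
  refine Eq.trans ?_ (Finset.sum_subset
      (Finset.filter_subset (fun l => ∀ i ∈ s, i ∣ l i) (finsuppAntidiag s n)) ?_)
  swap
  · intro l hl hnl
    simp only [mem_filter] at hnl
    rw [not_and] at hnl
    rw [not_forall] at hnl
    obtain ⟨i, hi⟩ := hnl hl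
    rw [not_forall] at hi
    obtain ⟨his, hnd⟩ := hi
    exact Finset.prod_eq_zero his (by rw [if_neg hnd])
  set φ : n.Partition → (ℕ →₀ ℕ) := fun p => {
      toFun := fun i => p.parts.count i * i
      support := Finset.filter (fun i => i ≠ 0) p.parts.toFinset
      mem_support_toFun := fun a => by
        simp only [ne_eq, mul_eq_zero, Multiset.count_eq_zero]
        rw [not_or, not_not]
        simp only [Multiset.mem_toFinset, not_not, mem_filter] } with hφ
  refine Finset.sum_bij (fun p _ => φ p) ?_ ?_ ?_ ?_
  · intro p hp
    simp only [mem_filter, mem_univ, true_and] at hp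
    simp only [mem_filter, mem_finsuppAntidiag]
    dsimp only [φ, Finsupp.coe_mk]
    refine ⟨⟨?_, fun i hi => ?_⟩, fun i _ => Dvd.intro_left _ rfl⟩
    · conv_rhs => rw [← p.parts_sum]
      rw [sum_multiset_count_of_subset _ s]
      · simp only [smul_eq_mul]
      · intro i
        simp only [Multiset.mem_toFinset]
        apply hp
    · simp only [ne_eq, Multiset.mem_toFinset, mem_filter, and_imp] at hi ⊢
      exact hp i hi.1
  · intro p₁ hp₁ p₂ hp₂ h
    apply Nat.Partition.ext
    simp only [mem_filter, mem_univ, true_and] at hp₁ hp₂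
    ext i
    simp only [φ, ne_eq, Finsupp.mk.injEq] at h
    by_cases hi : i = 0
    · rw [hi, Multiset.count_eq_zero_of_notMem, Multiset.count_eq_zero_of_notMem]
      · intro a; exact Nat.lt_irrefl 0 (hs 0 (hp₂ 0 a))
      · intro a; exact Nat.lt_irrefl 0 (hs 0 (hp₁ 0 a))
    · rw [← mul_left_inj' hi]
      rw [funext_iff] at h
      exact h.2 i
  · intro f hf
    simp only [mem_filter, mem_finsuppAntidiag] at hf
    obtain ⟨⟨hf₁, hf₂⟩, hf₄⟩ := hf
    refine ⟨⟨∑ i ∈ s, Multiset.replicate (f i / i) i, ?_, ?_⟩, mem_filter.mpr ⟨mem_univ _, ?_⟩, ?_⟩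
    · intro i hi
      simp only [Multiset.mem_sum] at hi
      rcases hi with ⟨t, ht, z⟩
      rw [Multiset.eq_of_mem_replicate z]
      exact hs t ht
    · simp_rw [Multiset.sum_sum, Multiset.sum_replicate, Nat.nsmul_eq_mul]
      rw [← hf₁]
      exact sum_congr rfl fun i hi => Nat.div_mul_cancel (hf₄ i hi)
    · intro i hi
      rw [Multiset.mem_sum] at hi
      rcases hi with ⟨j, hj₁, hj₂⟩
      rwa [Multiset.eq_of_mem_replicate hj₂]
    · ext i
      simp only [φ, ne_eq, Finsupp.coe_mk]
      simp_rw [Multiset.count_sum', Multiset.count_replicate, sum_ite_eq']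
      split_ifs with h
      · exact Nat.div_mul_cancel (hf₄ i h)
      · rw [zero_mul]
        exact (Finsupp.notMem_support_iff.mp (fun hc => h (hf₂ hc))).symm
  · intro p hp
    simp only [mem_filter, mem_univ, true_and] at hp
    refine Finset.prod_congr rfl fun i hi => ?_
    dsimp only [φ, Finsupp.coe_mk]
    rw [if_pos (Dvd.intro_left _ rfl), Nat.mul_div_cancel _ (hs i hi)]

lemma geom_mul_one (i : ℕ) (hi : 0 < i) : (1 - (X : PowerSeries ℤ) ^ i) * geom i 1 = 1 := by
  have := geom_mul i hi 1
  rwa [map_one, one_mul] at this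

lemma geom_mul_neg (i : ℕ) (hi : 0 < i) : (1 + (X : PowerSeries ℤ) ^ i) * geom i (-1) = 1 := by
  have := geom_mul i hi (-1)
  rwa [map_neg, map_one, neg_one_mul, sub_neg_eq_add] at this


/-- Sum of counts over a superset of the support equals the card. -/
lemma sum_count_eq_card {M : Multiset ℕ} {s : Finset ℕ} (h : ∀ x ∈ M, x ∈ s) :
    ∑ i ∈ s, M.count i = Multiset.card M := by
  rw [← Multiset.toFinset_sum_count_eq M]
  exact (Finset.sum_subset (fun x hx => h x (Multiset.mem_toFinset.mp hx))
    (fun x _ hx => Multiset.count_eq_zero_of_notMem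
      (fun hc => hx (Multiset.mem_toFinset.mpr hc)))).symm

lemma partition_sign (d : ℕ) (hd : 1 ≤ d) (m : ℕ) (p : m.Partition) (hp : p.parts ∈ OParts d)
    (s : Finset ℕ) (hsub : ∀ j ∈ p.parts, j ∈ s) :
    ∏ i ∈ s, (if i % (4 * d) = 4 * d - 1 then (-1 : ℤ) else 1) ^ (p.parts.count i)
      = (-1) ^ ((m + 1) / 2) * (if Odd (pind m p) then (1 : ℤ) else -1) := by
  classical
  set C2 : ℕ → Prop := fun x => x % (4 * d) = 4 * d - 1 with hC2
  set C1 : ℕ → Prop := fun x => x % (4 * d) = 1 with hC1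
  set a := Multiset.card (p.parts.filter C1) with ha
  set b := Multiset.card (p.parts.filter C2) with hb
  have hne : ∀ x ∈ p.parts, ¬ C1 x ↔ C2 x := by
    intro x hx
    have := hp x hx
    simp only [C1, C2] at *
    omega
  -- LHS equals (-1)^b
  have hlhs : ∏ i ∈ s, (if C2 i then (-1 : ℤ) else 1) ^ (p.parts.count i) = (-1) ^ b := by
    have : ∀ i ∈ s, (if C2 i then (-1 : ℤ) else 1) ^ (p.parts.count i)
        = (-1) ^ ((p.parts.filter C2).count i) := by
      intro i _
      rw [Multiset.count_filter]
      split_ifs with h <;> simp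
    rw [Finset.prod_congr rfl this, Finset.prod_pow_eq_pow_sum,
      sum_count_eq_card (fun x hx => hsub x (Multiset.mem_of_mem_filter hx))]
  rw [hlhs]
  have hall_odd : ∀ x ∈ p.parts, Odd x := by
    intro x hx
    rw [Nat.odd_iff, ← Nat.mod_mod_of_dvd x (by omega : 2 ∣ 4 * d)]
    rcases hp x hx with h | h <;> rw [h] <;> omega
  -- op = a + b
  have hop : p.op = a + b := by
    rw [Nat.Partition.op, Multiset.filter_eq_self.mpr hall_odd]
    conv_lhs => rw [← Multiset.filter_add_not C1 p.parts]
    rw [Multiset.card_add, Multiset.filter_congr hne]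
  have hsplit : p.parts = p.parts.filter C1 + p.parts.filter C2 := by
    conv_lhs => rw [← Multiset.filter_add_not C1 p.parts]
    rw [Multiset.filter_congr hne]
  -- congruence mod 4
  have hcast1 : (p.parts.filter C1).map (Nat.cast : ℕ → ZMod 4)
      = Multiset.replicate a (1 : ZMod 4) := by
    rw [Multiset.eq_replicate]
    refine ⟨by simp [ha], fun y hy => ?_⟩
    obtain ⟨x, hx, rfl⟩ := Multiset.mem_map.mp hy
    have h : C1 x := Multiset.of_mem_filter hx
    have hdm := Nat.div_add_mod x (4 * d)
    have hr : 4 * d * (x / (4 * d)) = 4 * (d * (x / (4 * d))) := by ring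
    have hx4 : x = 4 * (d * (x / (4 * d))) + 1 := by simp only [C1] at h; omega
    rw [hx4]
    push_cast
    rw [show ((4 : ZMod 4)) = 0 by decide]
    ring
  have hcast2 : (p.parts.filter C2).map (Nat.cast : ℕ → ZMod 4)
      = Multiset.replicate b (-1 : ZMod 4) := by
    rw [Multiset.eq_replicate]
    refine ⟨by simp [hb], fun y hy => ?_⟩
    obtain ⟨x, hx, rfl⟩ := Multiset.mem_map.mp hy
    have h : C2 x := Multiset.of_mem_filter hx
    have hdm := Nat.div_add_mod x (4 * d)
    have hr : 4 * d * (x / (4 * d)) = 4 * (d * (x / (4 * d))) := by ring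
    have hr2 : 4 * (d * (x / (4 * d)) + (d - 1)) = 4 * (d * (x / (4 * d))) + 4 * (d - 1) := by
      ring
    have hx4 : x = 4 * (d * (x / (4 * d)) + (d - 1)) + 3 := by simp only [C2] at h; omega
    rw [hx4]
    push_cast
    rw [show ((4 : ZMod 4)) = 0 by decide, show ((3 : ZMod 4)) = -1 by decide]
    ring
  have hmod : (m + b) % 4 = a % 4 := by
    have hm : ((m : ZMod 4)) = (a : ZMod 4) - b := by
      conv_lhs => rw [← p.parts_sum, Nat.cast_multiset_sum, hsplit, Multiset.map_add,
        Multiset.sum_add, hcast1, hcast2, Multiset.sum_replicate, Multiset.sum_replicate]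
      simp only [nsmul_eq_mul, mul_one, mul_neg_one]
      ring
    have h2 : ((m + b : ℕ) : ZMod 4) = ((a : ℕ) : ZMod 4) := by
      push_cast
      rw [hm]
      ring
    exact (ZMod.natCast_eq_natCast_iff' _ _ _).mp h2
  rw [pind, hop, Nat.cast_add]
  exact (sign_arith m a b hmod).symm

end ParityGF

open ParityGF PowerSeries

/-- `Σ_n (-1)^{⌈n/2⌉}(o_{O^d}(n) - e_{O^d}(n)) q^n = 1/((q;q^{4d})_∞(-q^{4d-1};q^{4d})_∞)`:
for each `n`, the coefficient of `q^n` in the left-hand side multiplied by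
`Π_{j≤n} (1 - q^{4dj+1})(1 + q^{4dj+4d-1})` is `1` if `n = 0` and `0` otherwise. -/
theorem parity_gf_Od (d : ℕ) (hd : 1 ≤ d) :
    ∀ n : ℕ, PowerSeries.coeff (R := ℤ) n
      ((PowerSeries.mk fun m =>
          (-1 : ℤ) ^ ((m + 1) / 2) * ((oCount (OParts d) m : ℤ) - (eCount (OParts d) m : ℤ))) *
        ∏ j ∈ range (n + 1),
          ((1 - PowerSeries.X ^ (4 * d * j + 1)) *
            (1 + PowerSeries.X ^ (4 * d * j + (4 * d - 1))))) = if n = 0 then 1 else 0 := by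
  intro n
  classical
  set S : Finset ℕ := ((range (n + 1)).image (fun j => 4 * d * j + 1)) ∪
      ((range (n + 1)).image (fun j => 4 * d * j + (4 * d - 1))) with hS
  set w : ℕ → ℤ := fun i => if i % (4 * d) = 4 * d - 1 then (-1 : ℤ) else 1 with hw
  have hAmod : ∀ j : ℕ, (4 * d * j + 1) % (4 * d) = 1 := by
    intro j
    rw [show 4 * d * j + 1 = 1 + j * (4 * d) by ring, Nat.add_mul_mod_self_right]
    exact Nat.mod_eq_of_lt (by omega)
  have hBmod : ∀ j : ℕ, (4 * d * j + (4 * d - 1)) % (4 * d) = 4 * d - 1 := by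
    intro j
    rw [show 4 * d * j + (4 * d - 1) = (4 * d - 1) + j * (4 * d) by ring,
      Nat.add_mul_mod_self_right]
    exact Nat.mod_eq_of_lt (by omega)
  have hSpos : ∀ i ∈ S, 0 < i := by
    intro i hi
    rw [hS, mem_union, mem_image, mem_image] at hi
    rcases hi with ⟨j, _, rfl⟩ | ⟨j, _, rfl⟩ <;> omega
  have hSmod : ∀ i ∈ S, i % (4 * d) = 1 ∨ i % (4 * d) = 4 * d - 1 := by
    intro i hi
    rw [hS, mem_union, mem_image, mem_image] at hi
    rcases hi with ⟨j, _, rfl⟩ | ⟨j, _, rfl⟩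
    · exact Or.inl (hAmod j)
    · exact Or.inr (hBmod j)
  set G : PowerSeries ℤ := ∏ i ∈ S, geom i (w i) with hG
  -- Step A : the partial product is inverse to G
  have hdisj : Disjoint ((range (n + 1)).image (fun j => 4 * d * j + 1))
      ((range (n + 1)).image (fun j => 4 * d * j + (4 * d - 1))) := by
    rw [Finset.disjoint_left]
    rintro x hx hx'
    rw [mem_image] at hx hx'
    obtain ⟨j, _, rfl⟩ := hx
    obtain ⟨k, _, hk⟩ := hx'
    have h1 := hAmod j
    have h2 := hBmod k
    rw [hk] at h2
    omega
  have hinjA : ∀ x ∈ range (n + 1), ∀ y ∈ range (n + 1),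
      4 * d * x + 1 = 4 * d * y + 1 → x = y := by
    intro x _ y _ h
    exact Nat.eq_of_mul_eq_mul_left (show 0 < 4 * d by omega) (by omega)
  have hinjB : ∀ x ∈ range (n + 1), ∀ y ∈ range (n + 1),
      4 * d * x + (4 * d - 1) = 4 * d * y + (4 * d - 1) → x = y := by
    intro x _ y _ h
    exact Nat.eq_of_mul_eq_mul_left (show 0 < 4 * d by omega) (by omega)
  have hwA : ∀ j : ℕ, w (4 * d * j + 1) = 1 := by
    intro j
    rw [hw]
    simp only
    rw [if_neg]
    rw [hAmod j]
    omega
  have hwB : ∀ j : ℕ, w (4 * d * j + (4 * d - 1)) = -1 := by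
    intro j
    rw [hw]
    simp only
    rw [if_pos (hBmod j)]
  have hunit : (∏ j ∈ range (n + 1),
      ((1 - (X : PowerSeries ℤ) ^ (4 * d * j + 1)) *
        (1 + (X : PowerSeries ℤ) ^ (4 * d * j + (4 * d - 1))))) * G = 1 := by
    rw [hG, hS, Finset.prod_union hdisj, Finset.prod_image hinjA, Finset.prod_image hinjB,
      Finset.prod_mul_distrib]
    rw [show ∀ a b c e : PowerSeries ℤ, a * b * (c * e) = (a * c) * (b * e) from
      fun a b c e => by ring]
    rw [← Finset.prod_mul_distrib, ← Finset.prod_mul_distrib]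
    rw [Finset.prod_eq_one (fun j _ => by
        rw [hwA j]; exact geom_mul_one (4 * d * j + 1) (by omega)),
      Finset.prod_eq_one (fun j _ => by
        rw [hwB j]; exact geom_mul_neg (4 * d * j + (4 * d - 1)) (by omega)),
      one_mul]
  -- Step B : coefficients of the parity series agree with those of G up to degree n
  have hagree : ∀ k ≤ n, (-1 : ℤ) ^ ((k + 1) / 2) *
      ((oCount (OParts d) k : ℤ) - (eCount (OParts d) k : ℤ)) = coeff (R := ℤ) k G := by
    intro k hk
    rw [hG, ← weightedGF_prop k S hSpos w]
    have hsets : univ.filter (fun p : k.Partition => ∀ j ∈ p.parts, j ∈ S)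
        = univ.filter (fun p : k.Partition => p.parts ∈ OParts d) := by
      apply Finset.filter_congr
      intro p _
      constructor
      · intro h x hx
        exact hSmod x (h x hx)
      · intro h j hj
        have hjk : j ≤ k := by
          have := Multiset.single_le_sum (fun _ _ => Nat.zero_le _) _ hj
          rwa [p.parts_sum] at this
        have hdm := Nat.div_add_mod j (4 * d)
        have hjd : j / (4 * d) ≤ n := le_trans (Nat.div_le_self _ _) (le_trans hjk hk)
        rw [hS, mem_union, mem_image, mem_image]
        rcases h j hj with hmod | hmod
        · exact Or.inl ⟨j / (4 * d), mem_range.mpr (by omega), by omega⟩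
        · exact Or.inr ⟨j / (4 * d), mem_range.mpr (by omega), by omega⟩
    rw [hsets]
    have hterm : ∀ p ∈ univ.filter (fun p : k.Partition => p.parts ∈ OParts d),
        ∏ i ∈ S, w i ^ (p.parts.count i)
          = (-1 : ℤ) ^ ((k + 1) / 2) * (if Odd (pind k p) then (1 : ℤ) else -1) := by
      intro p hp
      rw [mem_filter] at hp
      have hmem : p ∈ univ.filter (fun p : k.Partition => ∀ j ∈ p.parts, j ∈ S) := by
        rw [hsets]
        exact mem_filter.mpr ⟨mem_univ p, hp.2⟩
      exact partition_sign d hd k p hp.2 S (mem_filter.mp hmem).2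
    rw [Finset.sum_congr rfl hterm, ← Finset.mul_sum]
    congr 1
    -- sum of ±1 equals oCount - eCount
    rw [Finset.sum_filter]
    have hpt : ∀ p : k.Partition,
        (if p.parts ∈ OParts d then (if Odd (pind k p) then (1 : ℤ) else -1) else 0)
          = (if p.parts ∈ OParts d ∧ Odd (pind k p) then (1 : ℤ) else 0)
            - (if p.parts ∈ OParts d ∧ Even (pind k p) then (1 : ℤ) else 0) := by
      intro p
      rcases Int.even_or_odd (pind k p) with he | ho
      · have h1 : ¬ Odd (pind k p) := by rwa [Int.not_odd_iff_even]
        by_cases hP : p.parts ∈ OParts d <;> simp [hP, he, h1]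
      · have h1 : ¬ Even (pind k p) := by rwa [Int.not_even_iff_odd]
        by_cases hP : p.parts ∈ OParts d <;> simp [hP, ho, h1]
    rw [Finset.sum_congr rfl (fun p _ => hpt p), Finset.sum_sub_distrib]
    rw [Finset.sum_boole, Finset.sum_boole]
    rw [oCount, eCount]
  -- Step C : conclude
  have hcoeff : coeff (R := ℤ) n ((PowerSeries.mk fun m =>
      (-1 : ℤ) ^ ((m + 1) / 2) * ((oCount (OParts d) m : ℤ) - (eCount (OParts d) m : ℤ))) *
        ∏ j ∈ range (n + 1), ((1 - (X : PowerSeries ℤ) ^ (4 * d * j + 1)) *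
          (1 + (X : PowerSeries ℤ) ^ (4 * d * j + (4 * d - 1)))))
      = coeff (R := ℤ) n (G * ∏ j ∈ range (n + 1),
          ((1 - (X : PowerSeries ℤ) ^ (4 * d * j + 1)) *
            (1 + (X : PowerSeries ℤ) ^ (4 * d * j + (4 * d - 1))))) := by
    rw [coeff_mul, coeff_mul]
    apply Finset.sum_congr rfl
    intro x hx
    rw [HasAntidiagonal.mem_antidiagonal] at hx
    rw [coeff_mk, hagree x.1 (by omega)]
  rw [hcoeff, mul_comm, hunit, coeff_one]
end

section
/- Let E(n) be the number of partitions of n into odd parts with an odd index minus the number of partitions of n into odd parts with an even index, where the index of λ ⊢ n has the parity of (op(λ) + (n mod 2))/2 − 1 and op(λ) is the number of (odd) parts of λ. Then Σ_{n≥0} (−1)^{⌈n/2⌉} E(n) q^n = Π_{n≥1} 1/(1 + (−1)^n q^{2n−1}). -/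
open Finset

/-- The set of partitions into odd parts. -/
def oddParts : Set (Multiset ℕ) := {s | ∀ x ∈ s, Odd x}

instance : DecidablePred (· ∈ oddParts) := fun s => by
  unfold oddParts; exact inferInstanceAs (Decidable (∀ x ∈ s, Odd x))

/-- `E(n)` : the number of partitions of `n` into odd parts with odd index minus the number
of those with even index. -/
def Eind (n : ℕ) : ℤ := (oCount oddParts n : ℤ) - (eCount oddParts n : ℤ)

open PowerSeries

noncomputable def wSeries (w : ℤ) (i : ℕ) : PowerSeries ℤ :=
  PowerSeries.mk fun m => if i ∣ m then w ^ (m / i) else 0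

lemma wSeries_mul (w : ℤ) (i : ℕ) (hi : 0 < i) :
    wSeries w i * (1 - PowerSeries.C w * PowerSeries.X ^ i) = 1 := by
  ext m
  rw [mul_sub, mul_one, map_sub, show PowerSeries.C w * X ^ i = (X:PowerSeries ℤ) ^ i * C w from mul_comm _ _,
    ← mul_assoc, PowerSeries.coeff_mul_C, PowerSeries.coeff_mul_X_pow']
  simp only [wSeries, coeff_mk, coeff_one]
  rcases Nat.eq_zero_or_pos m with rfl | hm
  · simp [Nat.not_le_of_lt hi]
  · rw [if_neg (by omega : ¬ m = 0)]
    by_cases hd : i ∣ m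
    · have hle : i ≤ m := Nat.le_of_dvd hm hd
      have hd' : i ∣ m - i := (Nat.dvd_sub hd dvd_rfl)
      rw [if_pos hd, if_pos hle, if_pos hd']
      obtain ⟨c, rfl⟩ := hd
      match c with
      | 0 => simp at hm
      | c + 1 =>
        have e1 : i * (c + 1) - i = i * c := by ring_nf; omega
        rw [e1, Nat.mul_div_cancel_left _ hi, Nat.mul_div_cancel_left _ hi, ← pow_succ]
        ring
    · rw [if_neg hd]
      by_cases hle : i ≤ m
      · have : ¬ i ∣ m - i := fun h => hd (by
          have := Nat.dvd_add h (dvd_refl i); rwa [Nat.sub_add_cancel hle] at this)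
        rw [if_pos hle, if_neg this]; ring
      · rw [if_neg hle]; ring

lemma weightedGF (n : ℕ) (s : Finset ℕ) (hs : ∀ i ∈ s, 0 < i) (w : ℕ → ℤ) :
    (∑ p ∈ Finset.univ.filter (fun p : n.Partition => ∀ j ∈ p.parts, j ∈ s),
      ∏ i ∈ s, w i ^ (p.parts.count i)) =
    PowerSeries.coeff n (∏ i ∈ s, wSeries (w i) i) := by
  classical
  rw [coeff_prod]
  simp only [wSeries, coeff_mk]
  rw [show (∑ l ∈ finsuppAntidiag s n, ∏ i ∈ s, if i ∣ l i then w i ^ (l i / i) else 0)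
      = ∑ l ∈ finsuppAntidiag s n, if ∀ i ∈ s, i ∣ l i then ∏ i ∈ s, w i ^ (l i / i) else 0 from
    Finset.sum_congr rfl fun l _ => Finset.prod_ite_zero, ← Finset.sum_filter]
  have happ : ∀ (c : ℕ → ℕ) (j : ℕ),
      (∑ i ∈ s, Finsupp.single i (c i)) j = if j ∈ s then c j else 0 := by
    intro c j
    rw [Finsupp.finset_sum_apply]
    simp_rw [Finsupp.single_apply]
    exact Finset.sum_ite_eq' s j c
  refine Finset.sum_bij (fun p _ => ∑ i ∈ s, Finsupp.single i (p.parts.count i * i)) ?_ ?_ ?_ ?_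
  · intro p hp
    simp only [mem_filter, mem_univ, true_and] at hp
    simp only [mem_filter, mem_finsuppAntidiag]
    refine ⟨⟨?_, ?_⟩, ?_⟩
    · have e1 : s.sum ⇑(∑ i ∈ s, Finsupp.single i (p.parts.count i * i))
          = ∑ i ∈ s, p.parts.count i * i :=
        Finset.sum_congr rfl fun i hi => by rw [happ, if_pos hi]
      rw [e1]
      conv_rhs => rw [← p.parts_sum]
      rw [Finset.sum_multiset_count_of_subset p.parts s
          (fun i hi => hp i (Multiset.mem_toFinset.mp hi))]
      exact Finset.sum_congr rfl fun i _ => (smul_eq_mul _ _).symm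
    · intro j hj
      rw [Finsupp.mem_support_iff] at hj
      by_contra hjs
      exact hj (by rw [happ, if_neg hjs])
    · intro i hi
      rw [happ, if_pos hi]
      exact dvd_mul_left i _
  · intro p₁ h₁ p₂ h₂ heq
    simp only [mem_filter, mem_univ, true_and] at h₁ h₂
    apply Nat.Partition.ext
    ext i
    by_cases his : i ∈ s
    · have := congrFun (congrArg (fun f : ℕ →₀ ℕ => (f : ℕ → ℕ)) heq) i
      rw [happ, happ, if_pos his, if_pos his] at this
      exact Nat.eq_of_mul_eq_mul_right (hs i his) this
    · rw [Multiset.count_eq_zero_of_notMem (fun h => his (h₁ i h)),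
        Multiset.count_eq_zero_of_notMem (fun h => his (h₂ i h))]
  · rintro f hf
    simp only [mem_filter, mem_finsuppAntidiag] at hf
    obtain ⟨⟨hsum, hsupp⟩, hdvd⟩ := hf
    refine ⟨⟨∑ i ∈ s, Multiset.replicate (f i / i) i, ?_, ?_⟩, ?_, ?_⟩
    · intro i hi
      rw [Multiset.mem_sum] at hi
      obtain ⟨j, hj, hij⟩ := hi
      rw [Multiset.eq_of_mem_replicate hij]
      exact hs j hj
    · simp_rw [Multiset.sum_sum, Multiset.sum_replicate, Nat.nsmul_eq_mul]
      rw [← hsum]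
      exact Finset.sum_congr rfl fun i hi => Nat.div_mul_cancel (hdvd i hi)
    · simp only [mem_filter, mem_univ, true_and]
      intro j hj
      rw [Multiset.mem_sum] at hj
      obtain ⟨i, hi, hij⟩ := hj
      rwa [Multiset.eq_of_mem_replicate hij]
    · ext j
      rw [happ]
      simp only [Multiset.count_sum', Multiset.count_replicate]
      rw [Finset.sum_ite_eq' s j]
      by_cases hjs : j ∈ s
      · rw [if_pos hjs, if_pos hjs, Nat.div_mul_cancel (hdvd j hjs)]
      · rw [if_neg hjs]
        exact (Finsupp.notMem_support_iff.mp (fun h => hjs (hsupp h))).symm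
  · intro p hp
    simp only [mem_filter, mem_univ, true_and] at hp
    refine Finset.prod_congr rfl fun i hi => ?_
    rw [happ, if_pos hi, Nat.mul_div_cancel _ (hs i hi)]

lemma Eind_eq (k : ℕ) :
    Eind k = ∑ p ∈ univ.filter (fun p : k.Partition => p.parts ∈ oddParts),
      (if Odd (pind k p) then (1:ℤ) else -1) := by
  classical
  rw [Finset.sum_ite, Finset.sum_const, Finset.sum_const, Finset.filter_filter,
    Finset.filter_filter]
  unfold Eind oCount eCount
  simp only [Int.not_odd_iff_even, smul_eq_mul, mul_one, mul_neg, nsmul_eq_mul]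
  omega

lemma part_weight (k : ℕ) (s : Finset ℕ) (hodd : ∀ i ∈ s, Odd i) (p : k.Partition)
    (hp : ∀ j ∈ p.parts, j ∈ s) :
    (-1:ℤ)^((k+1)/2) * (if Odd (pind k p) then (1:ℤ) else -1)
      = ∏ i ∈ s, ((-1:ℤ)^((i-1)/2)) ^ (p.parts.count i) := by
  classical
  have hpodd : ∀ j ∈ p.parts, Odd j := fun j hj => hodd j (hp j hj)
  have hop : p.op = Multiset.card p.parts := by
    unfold Nat.Partition.op
    rw [Multiset.filter_eq_self.2 hpodd]
  set m := Multiset.card p.parts with hm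
  set A := (p.parts.map fun x => (x - 1) / 2).sum with hA
  have h2 : 2 * A + m = k := by
    have hmapeq : p.parts.map (fun x => 2 * ((x - 1) / 2) + 1) = p.parts.map id := by
      refine Multiset.map_congr rfl fun x hx => ?_
      obtain ⟨r, hr⟩ := hpodd x hx
      simp only [id]
      omega
    have : (p.parts.map (fun x => 2 * ((x - 1) / 2) + 1)).sum = 2 * A + m := by
      rw [Multiset.sum_map_add]
      congr 1
      · rw [hA, ← Multiset.sum_map_mul_left]
      · simp [hm]
    rw [hmapeq, Multiset.map_id] at this
    rw [← this, p.parts_sum]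
  have hRHS : (∏ i ∈ s, ((-1:ℤ)^((i-1)/2)) ^ (p.parts.count i)) = (-1:ℤ)^A := by
    have : ∀ i ∈ s, ((-1:ℤ)^((i-1)/2)) ^ (p.parts.count i)
        = (-1:ℤ) ^ ((i-1)/2 * p.parts.count i) := fun i _ => by rw [← pow_mul]
    rw [Finset.prod_congr rfl this, Finset.prod_pow_eq_pow_sum]
    congr 1
    rw [hA, Finset.sum_multiset_map_count]
    rw [Finset.sum_subset (fun i hi => hp i (Multiset.mem_toFinset.mp hi))
      (fun i _ hi => by rw [Multiset.count_eq_zero_of_notMem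
        (fun h => hi (Multiset.mem_toFinset.mpr h))]; ring)]
    exact Finset.sum_congr rfl fun i _ => by rw [smul_eq_mul]; ring
  set t := (m + k % 2) / 2 with htdef
  have ht2 : 2 * t = m + k % 2 := by omega
  have hpind : pind k p = (t : ℤ) - 1 := by
    unfold pind
    rw [hop]
    omega
  have hiff : Odd (pind k p) ↔ Even t := by
    rw [hpind]
    constructor
    · intro h
      have : Even ((t:ℤ) - 1 + 1) := by
        rcases h with ⟨c, hc⟩; exact ⟨c + 1, by omega⟩
      simpa using this
    · intro h
      obtain ⟨c, hc⟩ := h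
      exact ⟨(c:ℤ) - 1, by omega⟩
  have hsign : (if Odd (pind k p) then (1:ℤ) else -1) = (-1:ℤ)^t := by
    rcases Nat.even_or_odd t with ht | ht
    · rw [if_pos (hiff.2 ht), ht.neg_one_pow]
    · rw [if_neg (fun h => (Nat.not_even_iff_odd.mpr ht) (hiff.1 h)), ht.neg_one_pow]
  rw [hsign, hRHS, ← pow_add]
  rcases Nat.even_or_odd A with hA' | hA'
  · rw [hA'.neg_one_pow,
      (Nat.even_iff.mpr (by have := Nat.even_iff.mp hA'; omega : ((k+1)/2 + t) % 2 = 0)).neg_one_pow]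
  · rw [hA'.neg_one_pow,
      (Nat.odd_iff.mpr (by have := Nat.odd_iff.mp hA'; omega : ((k+1)/2 + t) % 2 = 1)).neg_one_pow]

/-- `Σ_n (-1)^{⌈n/2⌉} E(n) q^n = Π_{m≥1} 1/(1 + (-1)^m q^{2m-1})`: for each `n`, the
coefficient of `q^n` in the left-hand side multiplied by the truncated product
`Π_{1≤m≤n+1} (1 + (-1)^m q^{2m-1})` is `1` if `n = 0` and `0` otherwise. -/
theorem parity_gf_odd :
    ∀ n : ℕ, PowerSeries.coeff (R := ℤ) n
      ((PowerSeries.mk fun m => (-1 : ℤ) ^ ((m + 1) / 2) * Eind m) *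
        ∏ j ∈ range (n + 1),
          (1 + (-1 : PowerSeries ℤ) ^ (j + 1) * PowerSeries.X ^ (2 * (j + 1) - 1)))
      = if n = 0 then 1 else 0 := by
  classical
  intro n
  set s : Finset ℕ := (range (n+1)).image (fun j => 2*j+1) with hsdef
  have hs_pos : ∀ i ∈ s, 0 < i := by
    intro i hi
    simp only [hsdef, mem_image, mem_range] at hi
    obtain ⟨j, _, rfl⟩ := hi
    omega
  have hs_odd : ∀ i ∈ s, Odd i := by
    intro i hi
    simp only [hsdef, mem_image, mem_range] at hi
    obtain ⟨j, _, rfl⟩ := hi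
    exact ⟨j, by ring⟩
  set w : ℕ → ℤ := fun i => (-1:ℤ)^((i-1)/2) with hwdef
  set G : PowerSeries ℤ := ∏ i ∈ s, wSeries (w i) i with hGdef
  set B : PowerSeries ℤ := ∏ j ∈ range (n + 1),
      (1 + (-1 : PowerSeries ℤ) ^ (j + 1) * PowerSeries.X ^ (2 * (j + 1) - 1)) with hBdef
  -- coefficient agreement for k ≤ n
  have hA : ∀ k, k ≤ n →
      PowerSeries.coeff k (PowerSeries.mk fun m => (-1 : ℤ) ^ ((m + 1) / 2) * Eind m)
        = PowerSeries.coeff k G := by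
    intro k hk
    rw [coeff_mk, hGdef, ← weightedGF k s hs_pos w, Eind_eq, Finset.mul_sum]
    have hfilt : (univ.filter (fun p : k.Partition => p.parts ∈ oddParts))
        = (univ.filter (fun p : k.Partition => ∀ j ∈ p.parts, j ∈ s)) := by
      apply Finset.filter_congr
      intro p _
      constructor
      · intro hmem j hj
        have hjodd : Odd j := hmem j hj
        have hjk : j ≤ k := by
          have := Multiset.le_sum_of_mem hj -- maybe wrong name
          rwa [p.parts_sum] at this
        obtain ⟨r, hr⟩ := hjodd
        simp only [hsdef, mem_image, mem_range]
        exact ⟨r, by omega, by omega⟩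
      · intro hmem j hj
        exact hs_odd j (hmem j hj)
    rw [hfilt]
    refine Finset.sum_congr rfl fun p hp => ?_
    simp only [mem_filter, mem_univ, true_and] at hp
    exact part_weight k s hs_odd p hp
  -- product is one
  have hGB : G * B = 1 := by
    have hinj : Set.InjOn (fun j => 2*j+1) (range (n+1)) := fun a _ b _ h => by simp only at h; omega
    rw [hGdef, hsdef, Finset.prod_image hinj, hBdef, ← Finset.prod_mul_distrib]
    rw [Finset.prod_congr rfl (fun j _ => ?_), Finset.prod_const_one]
    have hfac : (1 + (-1 : PowerSeries ℤ) ^ (j + 1) * PowerSeries.X ^ (2 * (j + 1) - 1))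
        = 1 - PowerSeries.C (w (2*j+1)) * PowerSeries.X ^ (2*j+1) := by
      have e1 : 2 * (j + 1) - 1 = 2*j+1 := by omega
      have e2 : w (2*j+1) = (-1:ℤ)^j := by
        simp only [hwdef]
        congr 1
        omega
      have e3 : ((-1 : PowerSeries ℤ))^(j+1) = PowerSeries.C ((-1:ℤ)^(j+1)) := by
        rw [map_pow, map_neg, map_one]
      rw [e1, e2, e3, pow_succ, map_mul, map_neg, map_one]
      ring
    rw [hfac]
    exact wSeries_mul (w (2*j+1)) (2*j+1) (by omega)
  calc PowerSeries.coeff n ((PowerSeries.mk fun m => (-1 : ℤ) ^ ((m + 1) / 2) * Eind m) * B)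
      = PowerSeries.coeff n (G * B) := by
        rw [PowerSeries.coeff_mul, PowerSeries.coeff_mul]
        refine Finset.sum_congr rfl fun x hx => ?_
        rw [Finset.HasAntidiagonal.mem_antidiagonal] at hx
        rw [hA x.1 (by omega)]
    _ = if n = 0 then 1 else 0 := by rw [hGB, PowerSeries.coeff_one]
end

section
/- If a partition λ of n has exactly n − 2k odd parts, then λ has at most k parts of size greater than 1, and the largest part of λ is at most 2k + 1. Consequently, for fixed k, the quantity c_n(k) = #{λ ⊢ n : op(λ) = n − 2k} is constant for all sufficiently large n (it stabilizes). -/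
open Finset

/-- The conjugated index `ind_{1^n}(λ) = (op(λ) + n)/2 - 1`. -/
def cind (n : ℕ) (p : n.Partition) : ℤ := ((p.op : ℤ) + (n : ℤ)) / 2 - 1

/-- `c_n(k)`: the number of partitions `λ` of `n` with `ind_{1^n}(λ) = n - k - 1`. -/
def cnk (n k : ℕ) : ℕ :=
  (univ.filter (fun p : n.Partition => cind n p = (n : ℤ) - k - 1)).card

private lemma sum_g (s : Multiset ℕ) :
    (s.map (fun x => x - if Odd x then 1 else 0)).sum
      + (s.filter (fun x => Odd x)).card = s.sum := by
  induction s using Multiset.induction with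
  | empty => simp
  | cons a t ih =>
    simp only [Multiset.map_cons, Multiset.sum_cons, Multiset.filter_cons,
      Multiset.card_add, Multiset.card_cons]
    by_cases h : Odd a
    · have ha : 1 ≤ a := h.pos
      simp only [if_pos h, Multiset.card_singleton]
      omega
    · simp only [if_neg h, Multiset.card_zero]
      omega

private lemma main_bound (k : ℕ) : ∀ (n : ℕ) (p : n.Partition),
    (p.op : ℤ) = (n : ℤ) - 2 * k →
      (p.parts.filter (fun x => 1 < x)).card ≤ k ∧ ∀ x ∈ p.parts, x ≤ 2 * k + 1 := by
  intro n p hop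
  set s := p.parts with hs
  set g : ℕ → ℕ := fun x => x - if Odd x then 1 else 0 with hg
  have hn : n = p.op + 2 * k := by
    have : (n : ℤ) = (p.op : ℤ) + 2 * k := by omega
    exact_mod_cast this
  have hsum : (s.map g).sum + p.op = n := by
    have := sum_g s
    rw [hs, p.parts_sum] at this; exact this
  have hgsum : (s.map g).sum = 2 * k := by omega
  constructor
  · have hsplit : (s.map g).sum
        = ((s.filter (fun x => 1 < x)).map g).sum
          + ((s.filter (fun x => ¬ 1 < x)).map g).sum := by
      conv_lhs => rw [← Multiset.filter_add_not (fun x => 1 < x) s]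
      rw [Multiset.map_add, Multiset.sum_add]
    have hge : ∀ y ∈ (s.filter (fun x => 1 < x)).map g, 2 ≤ y := by
      intro y hy
      obtain ⟨x, hx, rfl⟩ := Multiset.mem_map.mp hy
      have hx1 : 1 < x := (Multiset.mem_filter.mp hx).2
      by_cases h : Odd x
      · simp only [hg, if_pos h]
        obtain ⟨m, hm⟩ := h
        omega
      · simp only [hg, if_neg h]
        omega
    have h2 : Multiset.card ((s.filter (fun x => 1 < x)).map g) • 2
        ≤ ((s.filter (fun x => 1 < x)).map g).sum := Multiset.card_nsmul_le_sum hge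
    rw [Multiset.card_map] at h2
    have : ((s.filter (fun x => 1 < x)).map g).sum ≤ 2 * k := by omega
    have hcard := le_trans h2 this
    simp only [smul_eq_mul] at hcard
    omega
  · intro x hx
    have hxg : g x ≤ (s.map g).sum :=
      Multiset.single_le_sum (fun y _ => Nat.zero_le y) _
        (Multiset.mem_map_of_mem g hx)
    rw [hgsum] at hxg
    by_cases h : Odd x
    · simp only [hg, if_pos h] at hxg; omega
    · simp only [hg, if_neg h] at hxg; omega

private def Sset (k n : ℕ) : Finset n.Partition :=
  univ.filter (fun p : n.Partition => (p.op : ℤ) = (n : ℤ) - 2 * k)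

private lemma one_mem (k n : ℕ) (hn : k * (2 * k + 1) ≤ n) (q : (n + 1).Partition)
    (hq' : (q.op : ℤ) = ((n + 1 : ℕ) : ℤ) - 2 * k) : 1 ∈ q.parts := by
  by_contra hone
  have hbig : ∀ x ∈ q.parts, 1 < x := by
    intro x hx
    rcases eq_or_ne x 1 with rfl | hne
    · exact absurd hx hone
    · have := q.parts_pos hx
      omega
  obtain ⟨hc, hle⟩ := main_bound k (n + 1) q hq'
  have hfilter : q.parts.filter (fun x => 1 < x) = q.parts :=
    Multiset.filter_eq_self.mpr hbig
  rw [hfilter] at hc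
  have hsum : q.parts.sum ≤ Multiset.card q.parts • (2 * k + 1) :=
    Multiset.sum_le_card_nsmul _ _ hle
  rw [q.parts_sum] at hsum
  simp only [smul_eq_mul] at hsum
  have : n + 1 ≤ k * (2 * k + 1) := by
    calc n + 1 ≤ Multiset.card q.parts * (2 * k + 1) := hsum
      _ ≤ k * (2 * k + 1) := Nat.mul_le_mul_right _ hc
  omega

private lemma step (k n : ℕ) (hn : k * (2 * k + 1) ≤ n) :
    (Sset k (n + 1)).card = (Sset k n).card := by
  have hone : ∀ q ∈ Sset k (n + 1), 1 ∈ q.parts := by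
    intro q hq
    exact one_mem k n hn q (by simpa [Sset] using hq)
  symm
  refine Finset.card_bij'
    (i := fun p _ => (⟨1 ::ₘ p.parts, ?_, ?_⟩ : (n+1).Partition))
    (j := fun q hq => (⟨q.parts.erase 1, ?_, ?_⟩ : n.Partition)) ?_ ?_ ?_ ?_
  case refine_1 =>
    intro i hi
    rcases Multiset.mem_cons.mp hi with h | h
    · omega
    · exact p.parts_pos h
  case refine_2 =>
    simp [p.parts_sum, Nat.add_comm]
  case refine_3 =>
    intro i hi
    exact q.parts_pos (Multiset.mem_of_mem_erase hi)
  case refine_4 =>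
    have h1 := Multiset.sum_erase (hone q hq)
    have hqs := q.parts_sum
    omega
  case refine_5 =>
    intro p hp
    have hp' : (p.op : ℤ) = (n : ℤ) - 2 * k := by simpa [Sset] using hp
    simp only [Sset, Finset.mem_filter, Finset.mem_univ, true_and]
    show ((Multiset.filter (fun x => Odd x) (1 ::ₘ p.parts)).card : ℤ) = _
    rw [Multiset.filter_cons_of_pos _ (by simp [Nat.odd_iff])]
    push_cast [Multiset.card_cons]
    push_cast [Nat.Partition.op] at hp'
    omega
  case refine_6 =>
    intro q hq
    have hq' : (q.op : ℤ) = ((n + 1 : ℕ) : ℤ) - 2 * k := by simpa [Sset] using hq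
    have hcons : (1 : ℕ) ::ₘ q.parts.erase 1 = q.parts := Multiset.cons_erase (hone q hq)
    simp only [Sset, Finset.mem_filter, Finset.mem_univ, true_and]
    show ((Multiset.filter (fun x => Odd x) (q.parts.erase 1)).card : ℤ) = _
    have hcard : q.op = (Multiset.filter (fun x => Odd x) (q.parts.erase 1)).card + 1 := by
      unfold Nat.Partition.op
      rw [← hcons, Multiset.filter_cons_of_pos _ (by simp [Nat.odd_iff])]
      simp [Multiset.card_cons]
    push_cast at hq' ⊢
    omega
  case refine_7 =>
    intro p hp
    apply Nat.Partition.ext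
    simp
  case refine_8 =>
    intro q hq
    apply Nat.Partition.ext
    exact Multiset.cons_erase (hone q hq)

/-- If a partition of `n` has exactly `n - 2k` odd parts, then it has at most `k` parts of
size greater than `1` and all its parts are at most `2k + 1`; consequently, for fixed `k`,
the quantity `#{λ ⊢ n : op(λ) = n - 2k}` is constant for all sufficiently large `n`. -/
theorem cnk_stabilizes (k : ℕ) :
    (∀ (n : ℕ) (p : n.Partition), (p.op : ℤ) = (n : ℤ) - 2 * k →
      (p.parts.filter (fun x => 1 < x)).card ≤ k ∧ ∀ x ∈ p.parts, x ≤ 2 * k + 1) ∧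
    ∃ N C : ℕ, ∀ n ≥ N,
      (univ.filter (fun p : n.Partition => (p.op : ℤ) = (n : ℤ) - 2 * k)).card = C := by
  refine ⟨main_bound k, k * (2 * k + 1), (Sset k (k * (2 * k + 1))).card, ?_⟩
  intro n hn
  show (Sset k n).card = _
  induction n, hn using Nat.le_induction with
  | base => rfl
  | succ n hn ih => rw [step k n hn, ih]
end

section
/- With c_n(k) = #{λ ⊢ n : op(λ) = n − 2k}, the double generating function satisfies Σ_{k,n≥0} c_n(k) t^k q^n = 1/((q; tq²)_∞ (tq²; tq²)_∞) = Π_{j≥0} 1/((1 − q (tq²)^j)(1 − tq² (tq²)^j)). -/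
open Finset

open scoped Classical

/-- The double generating function `Σ_{k,n} c_n(k) t^k q^n`, as a power series in `q` whose
coefficient of `q^n` is the polynomial `Σ_k c_n(k) t^k` (note `c_n(k) = 0` for `k > n`). -/
noncomputable def Cgen : PowerSeries (Polynomial ℤ) :=
  PowerSeries.mk fun n =>
    ∑ k ∈ range (n + 1), (cnk n k : ℤ) • (Polynomial.X : Polynomial ℤ) ^ k

/-- The geometric series for parts of size `i`, with weight `t^(i/2)` per part. -/
noncomputable def Gg (i : ℕ) : PowerSeries (Polynomial ℤ) :=
  PowerSeries.mk fun a => if i ∣ a then (Polynomial.X : Polynomial ℤ) ^ (a / i * (i / 2)) else 0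

lemma Gg_mul (i : ℕ) (hi : 0 < i) :
    Gg i * (1 - PowerSeries.C (R := Polynomial ℤ) (Polynomial.X ^ (i / 2)) * PowerSeries.X ^ i)
      = 1 := by
  have hre : Gg i * (PowerSeries.C (R := Polynomial ℤ) (Polynomial.X ^ (i / 2)) * PowerSeries.X ^ i)
      = PowerSeries.C (R := Polynomial ℤ) (Polynomial.X ^ (i / 2)) * (Gg i * PowerSeries.X ^ i) := by
    ring
  refine PowerSeries.ext fun a => ?_
  rw [mul_sub, mul_one, map_sub, hre, PowerSeries.coeff_C_mul, PowerSeries.coeff_mul_X_pow',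
    PowerSeries.coeff_one]
  simp only [Gg, PowerSeries.coeff_mk]
  rcases Nat.eq_zero_or_pos a with rfl | ha
  · simp [hi.ne']
  · rw [if_neg ha.ne']
    by_cases hia : i ≤ a
    · rw [if_pos hia]
      by_cases hd : i ∣ a
      · obtain ⟨q, rfl⟩ := hd
        have hq : 0 < q := Nat.pos_of_ne_zero fun h => by simp [h] at ha
        have h1 : i * q / i = q := Nat.mul_div_cancel_left _ hi
        have h2 : i ∣ i * q - i := Nat.dvd_sub (Dvd.intro q rfl) dvd_rfl
        have h3 : (i * q - i) / i = q - 1 := by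
          rw [show i * q - i = i * (q - 1) by rw [Nat.mul_sub_one]]
          exact Nat.mul_div_cancel_left _ hi
        rw [if_pos (dvd_mul_right i q), if_pos h2, h1, h3, ← pow_add, sub_eq_zero]
        congr 1
        obtain ⟨c, rfl⟩ : ∃ c, q = c + 1 := ⟨q - 1, by omega⟩
        simp only [Nat.add_sub_cancel]
        ring
      · have hd2 : ¬ i ∣ a - i := fun h => hd (by
          have h4 := Nat.sub_add_cancel hia
          rw [← h4]; exact Nat.dvd_add h dvd_rfl)
        rw [if_neg hd, if_neg hd2, mul_zero, sub_zero]
    · rw [if_neg hia]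
      have hd : ¬ i ∣ a := fun h => hia (Nat.le_of_dvd ha h)
      rw [if_neg hd, mul_zero, sub_zero]

/-- Weighted version of the partition generating function workhorse. -/
lemma Gg_prod (n : ℕ) (s : Finset ℕ) (hs : ∀ i ∈ s, 0 < i) :
    PowerSeries.coeff (R := Polynomial ℤ) n (∏ i ∈ s, Gg i) =
      ∑ p ∈ univ.filter (fun p : n.Partition => ∀ j ∈ p.parts, j ∈ s),
        (Polynomial.X : Polynomial ℤ) ^ (∑ i ∈ s, p.parts.count i * (i / 2)) := by
  rw [PowerSeries.coeff_prod]
  simp only [Gg, PowerSeries.coeff_mk]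
  rw [Finset.sum_congr rfl fun l _ => Finset.prod_ite_zero (s := s)
    (p := fun i => i ∣ l i) (f := fun i => (Polynomial.X : Polynomial ℤ) ^ (l i / i * (i / 2)))]
  rw [Finset.sum_ite, Finset.sum_const_zero, add_zero]
  symm
  set φ : (p : Nat.Partition n) →
      p ∈ univ.filter (fun p : n.Partition => ∀ j ∈ p.parts, j ∈ s) → (ℕ →₀ ℕ) :=
    fun p _ => {
      toFun := fun i => p.parts.count i • i
      support := Finset.filter (fun i => i ≠ 0) p.parts.toFinset
      mem_support_toFun := fun a => by
        simp only [smul_eq_mul, ne_eq, mul_eq_zero, Multiset.count_eq_zero]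
        rw [not_or, not_not]
        simp only [Multiset.mem_toFinset, not_not, mem_filter] }
  apply Finset.sum_bij φ
  · intro p hp
    simp only [mem_filter, mem_univ, true_and] at hp
    simp only [mem_filter, Finset.mem_finsuppAntidiag, φ]
    refine ⟨⟨?_, ?_⟩, fun i _ => ?_⟩
    · conv_rhs => rw [← p.parts_sum]
      rw [Finset.sum_multiset_count_of_subset _ s
        (fun i hi => hp i (Multiset.mem_toFinset.mp hi))]
      exact Finset.sum_congr rfl fun i _ => by simp only [Finsupp.coe_mk]
    · intro i hi
      rw [mem_filter, Multiset.mem_toFinset] at hi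
      exact hp i hi.1
    · simp only [Finsupp.coe_mk, smul_eq_mul]
      exact Dvd.intro_left _ rfl
  · intro p₁ hp₁ p₂ hp₂ h
    apply Nat.Partition.ext
    simp only [mem_filter, mem_univ, true_and] at hp₁ hp₂
    ext i
    simp only [φ, Finsupp.mk.injEq, smul_eq_mul] at h
    by_cases hi : i = 0
    · rw [hi, Multiset.count_eq_zero_of_notMem, Multiset.count_eq_zero_of_notMem]
      · intro a; exact Nat.lt_irrefl 0 (hs 0 (hp₂ 0 a))
      · intro a; exact Nat.lt_irrefl 0 (hs 0 (hp₁ 0 a))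
    · rw [← mul_left_inj' hi]
      rw [funext_iff] at h
      exact h.2 i
  · intro f hf
    simp only [mem_filter, Finset.mem_finsuppAntidiag] at hf
    obtain ⟨⟨hf1, hf2⟩, hf3⟩ := hf
    refine ⟨⟨∑ i ∈ s, Multiset.replicate (f i / i) i, ?_, ?_⟩, ?_, ?_⟩
    · intro i hi
      simp only [Multiset.mem_sum] at hi
      obtain ⟨t, ht, hz⟩ := hi
      rw [Multiset.eq_of_mem_replicate hz]
      exact hs t ht
    · simp_rw [Multiset.sum_sum, Multiset.sum_replicate, Nat.nsmul_eq_mul]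
      rw [← hf1]
      exact Finset.sum_congr rfl fun i hi => Nat.div_mul_cancel (hf3 i hi)
    · simp only [mem_filter, mem_univ, true_and]
      intro j hj
      simp only [Multiset.mem_sum] at hj
      obtain ⟨t, ht, hz⟩ := hj
      rwa [Multiset.eq_of_mem_replicate hz]
    · ext i
      simp only [φ, Finsupp.coe_mk, smul_eq_mul]
      simp_rw [Multiset.count_sum', Multiset.count_replicate, Finset.sum_ite_eq']
      split_ifs with h
      · exact Nat.div_mul_cancel (hf3 i h)
      · rw [zero_mul]
        exact (Finsupp.notMem_support_iff.mp fun hs' => h (hf2 hs')).symm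
  · intro p hp
    rw [← Finset.prod_pow_eq_pow_sum]
    refine Finset.prod_congr rfl fun i hi => ?_
    congr 1
    simp only [φ, Finsupp.coe_mk, smul_eq_mul]
    rw [Nat.mul_div_cancel _ (hs i hi)]

lemma multiset_op (m : Multiset ℕ) :
    (m.filter (fun x => Odd x)).card + 2 * (m.map (fun x => x / 2)).sum = m.sum := by
  induction m using Multiset.induction_on with
  | empty => simp
  | cons a t ih =>
    rw [Multiset.filter_cons, Multiset.map_cons, Multiset.sum_cons, Multiset.sum_cons,
      Multiset.card_add]
    by_cases h : Odd a
    · have h2 := Nat.odd_iff.mp h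
      simp only [h, if_pos]
      rw [Multiset.card_singleton]
      omega
    · have h2 := Nat.even_iff.mp (Nat.not_odd_iff_even.mp h)
      simp only [h, if_neg, not_false_iff]
      rw [Multiset.card_zero]
      omega

lemma op_eq (n : ℕ) (p : n.Partition) :
    p.op + 2 * (p.parts.map (fun x => x / 2)).sum = n := by
  have h := multiset_op p.parts
  rw [p.parts_sum] at h
  exact h

lemma cind_eq (n : ℕ) (p : n.Partition) :
    cind n p = (n : ℤ) - (((p.parts.map (fun x => x / 2)).sum : ℕ) : ℤ) - 1 := by
  have h := op_eq n p
  rw [cind]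
  omega

lemma sum_part (n : ℕ) :
    ∑ p : n.Partition, (Polynomial.X : Polynomial ℤ) ^ ((p.parts.map (fun x => x / 2)).sum) =
      ∑ k ∈ range (n + 1), (cnk n k : ℤ) • (Polynomial.X : Polynomial ℤ) ^ k := by
  have hmap : ∀ p : n.Partition, (p.parts.map (fun x => x / 2)).sum ∈ range (n + 1) := by
    intro p
    have h := op_eq n p
    rw [mem_range]; omega
  rw [← Finset.sum_fiberwise_of_maps_to
    (g := fun p : n.Partition => (p.parts.map (fun x => x / 2)).sum) (fun p _ => hmap p)]
  refine Finset.sum_congr rfl fun k hk => ?_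
  rw [Finset.sum_congr rfl (fun p hp => by rw [(mem_filter.mp hp).2]), Finset.sum_const, cnk]
  have hfeq : (univ.filter fun p : n.Partition => cind n p = (n : ℤ) - k - 1) =
      (univ.filter fun p : n.Partition => (p.parts.map (fun x => x / 2)).sum = k) := by
    refine Finset.filter_congr fun p _ => ?_
    rw [cind_eq]
    constructor
    · intro h
      have h2 : (((p.parts.map (fun x => x / 2)).sum : ℕ) : ℤ) = (k : ℤ) := by omega
      exact_mod_cast h2
    · intro h; rw [h]
  rw [hfeq, natCast_zsmul]

lemma prod_pair (m : ℕ) :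
    ∏ j ∈ range m, (Gg (2 * j + 1) * Gg (2 * j + 2)) = ∏ i ∈ range (2 * m), Gg (i + 1) := by
  induction m with
  | zero => simp
  | succ m ih =>
    rw [Finset.prod_range_succ, ih, show 2 * (m + 1) = 2 * m + 1 + 1 by ring,
      Finset.prod_range_succ, Finset.prod_range_succ]
    ring

lemma coeff_H (n a : ℕ) (ha : a ≤ n) :
    PowerSeries.coeff (R := Polynomial ℤ) a (∏ i ∈ range (2 * (n + 1)), Gg (i + 1)) =
      ∑ k ∈ range (a + 1), (cnk a k : ℤ) • (Polynomial.X : Polynomial ℤ) ^ k := by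
  have h1 : ∏ i ∈ range (2 * (n + 1)), Gg (i + 1) =
      ∏ i ∈ (range (2 * (n + 1))).map ⟨Nat.succ, Nat.succ_injective⟩, Gg i := by
    rw [Finset.prod_map]
    rfl
  have hpos : ∀ i ∈ (range (2 * (n + 1))).map ⟨Nat.succ, Nat.succ_injective⟩, 0 < i := by
    intro i hi
    simp only [Finset.mem_map, Function.Embedding.coeFn_mk] at hi
    obtain ⟨b, _, rfl⟩ := hi
    exact Nat.succ_pos b
  rw [h1, Gg_prod a _ hpos]
  have hfull : (univ.filter fun p : a.Partition =>
      ∀ j ∈ p.parts, j ∈ (range (2 * (n + 1))).map ⟨Nat.succ, Nat.succ_injective⟩) = univ := by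
    rw [Finset.filter_eq_self]
    intro p _ j hj
    have hj1 : 0 < j := p.parts_pos hj
    have hj2 : j ≤ a := by
      have := Multiset.single_le_sum (fun _ _ => Nat.zero_le _) _ hj
      rwa [p.parts_sum] at this
    simp only [Finset.mem_map, Finset.mem_range, Function.Embedding.coeFn_mk]
    exact ⟨j - 1, by omega, by omega⟩
  rw [hfull, ← sum_part]
  refine Finset.sum_congr rfl fun p _ => ?_
  congr 1
  rw [Finset.sum_multiset_map_count]
  simp_rw [smul_eq_mul]
  refine (Finset.sum_subset ?_ ?_).symm
  · intro i hi
    simp only [Multiset.mem_toFinset] at hi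
    have hi1 : 0 < i := p.parts_pos hi
    have hi2 : i ≤ a := by
      have := Multiset.single_le_sum (fun _ _ => Nat.zero_le _) _ hi
      rwa [p.parts_sum] at this
    simp only [Finset.mem_map, Finset.mem_range, Function.Embedding.coeFn_mk]
    exact ⟨i - 1, by omega, by omega⟩
  · intro i _ hi
    simp only [Multiset.mem_toFinset] at hi
    rw [Multiset.count_eq_zero_of_notMem hi, zero_mul]

/-- `Σ_{k,n} c_n(k) t^k q^n = 1/((q;tq²)_∞ (tq²;tq²)_∞) = Π_j 1/((1-q(tq²)^j)(1-tq²(tq²)^j))`: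
for each `n`, the coefficient of `q^n` in the left-hand side multiplied by
`Π_{j≤n} (1 - t^j q^{2j+1})(1 - t^{j+1} q^{2j+2})` is `1` if `n = 0` and `0` otherwise. -/
theorem Cgen_eq :
    ∀ n : ℕ, PowerSeries.coeff (R := Polynomial ℤ) n
      (Cgen * ∏ j ∈ range (n + 1),
        ((1 - PowerSeries.C (R := Polynomial ℤ) (Polynomial.X ^ j) * PowerSeries.X ^ (2 * j + 1)) *
          (1 - PowerSeries.C (R := Polynomial ℤ) (Polynomial.X ^ (j + 1)) *
            PowerSeries.X ^ (2 * j + 2)))) = if n = 0 then 1 else 0 := by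
  intro n
  set F := ∏ j ∈ range (n + 1),
      ((1 - PowerSeries.C (R := Polynomial ℤ) (Polynomial.X ^ j) * PowerSeries.X ^ (2 * j + 1)) *
        (1 - PowerSeries.C (R := Polynomial ℤ) (Polynomial.X ^ (j + 1)) *
          PowerSeries.X ^ (2 * j + 2))) with hF
  set H := ∏ i ∈ range (2 * (n + 1)), Gg (i + 1) with hHdef
  have hHF : H * F = 1 := by
    rw [hHdef, ← prod_pair, hF, ← Finset.prod_mul_distrib]
    rw [Finset.prod_congr rfl (g := fun _ => (1 : PowerSeries (Polynomial ℤ))) fun j _ => ?_,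
      Finset.prod_const_one]
    have e1 : (2 * j + 1) / 2 = j := by omega
    have e2 : (2 * j + 2) / 2 = j + 1 := by omega
    have h1 := Gg_mul (2 * j + 1) (by omega)
    have h2 := Gg_mul (2 * j + 2) (by omega)
    rw [e1] at h1
    rw [e2] at h2
    rw [mul_mul_mul_comm, h1, h2, one_mul]
  have hcoeff : PowerSeries.coeff (R := Polynomial ℤ) n (Cgen * F) =
      PowerSeries.coeff (R := Polynomial ℤ) n (H * F) := by
    rw [PowerSeries.coeff_mul, PowerSeries.coeff_mul]
    refine Finset.sum_congr rfl fun x hx => ?_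
    rw [Finset.HasAntidiagonal.mem_antidiagonal] at hx
    congr 1
    rw [Cgen, PowerSeries.coeff_mk, hHdef, coeff_H n x.1 (by omega)]
  rw [hcoeff, hHF, PowerSeries.coeff_one]
end

section
/- Let c(k) be the number of partitions λ (of any size) with no part equal to 1 such that Σ_{i≥1} i(f_{2i} + f_{2i+1}) = k, where f_i is the multiplicity of part i. Then Σ_{k≥0} c(k) x^k = 1/(x; x)_∞², i.e. c(k) equals the number of two-colored partitions of k. -/
open Finset

/-- `c̃_n(k)`: the number of partitions `λ` of `n` with no part equal to `1` and with
`Σ_{i≥1} i (f_{2i} + f_{2i+1}) = k`, where `f_i` is the multiplicity of the part `i`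
(parts of `λ` are at most `n`, so only `1 ≤ i ≤ n` can contribute). -/
def ctilde (n k : ℕ) : ℕ :=
  (univ.filter (fun p : n.Partition =>
    1 ∉ p.parts ∧
      ∑ i ∈ Finset.Icc 1 n, i * (p.parts.count (2 * i) + p.parts.count (2 * i + 1)) = k)).card

/-- `c(k)`: the number of partitions (of any weight) with no part equal to `1` such that
`Σ_{i≥1} i (f_{2i} + f_{2i+1}) = k`; it is the (finitely supported) sum `Σ_n c̃_n(k)`. -/
noncomputable def cc (k : ℕ) : ℕ := ∑' n : ℕ, ctilde n k

open PowerSeries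

namespace CGF

noncomputable section

variable {α : Type*}

open Finset

open scoped Classical

/-- The partial product for the generating function for odd partitions.
TODO: As `m` tends to infinity, this converges (in the `X`-adic topology).

If `m` is sufficiently large, the `i`th coefficient gives the number of odd partitions of the
natural number `i`: proved in `oddGF_prop`.
It is stated for an arbitrary field `α`, though it usually suffices to use `ℚ` or `ℝ`.
-/
def partialOddGF (m : ℕ) [Field α] :=
  ∏ i ∈ range m, (1 - (X : PowerSeries α) ^ (2 * i + 1))⁻¹

/-- The partial product for the generating function for distinct partitions.
TODO: As `m` tends to infinity, this converges (in the `X`-adic topology).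

If `m` is sufficiently large, the `i`th coefficient gives the number of distinct partitions of the
natural number `i`: proved in `distinctGF_prop`.
It is stated for an arbitrary commutative semiring `α`, though it usually suffices to use `ℕ`, `ℚ`
or `ℝ`.
-/
def partialDistinctGF (m : ℕ) [CommSemiring α] :=
  ∏ i ∈ range m, (1 + (X : PowerSeries α) ^ (i + 1))

open Finset.HasAntidiagonal

universe u
variable {ι : Type u}

/-- A convenience constructor for the power series whose coefficients indicate a subset. -/
def indicatorSeries (α : Type*) [Semiring α] (s : Set ℕ) : PowerSeries α :=
  PowerSeries.mk fun n => if n ∈ s then 1 else 0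

theorem coeff_indicator (s : Set ℕ) [Semiring α] (n : ℕ) :
    coeff (R := α) n (indicatorSeries _ s) = if n ∈ s then 1 else 0 :=
  coeff_mk _ _

theorem coeff_indicator_pos (s : Set ℕ) [Semiring α] (n : ℕ) (h : n ∈ s) :
    coeff (R := α) n (indicatorSeries _ s) = 1 := by rw [coeff_indicator, if_pos h]

theorem coeff_indicator_neg (s : Set ℕ) [Semiring α] (n : ℕ) (h : n ∉ s) :
    coeff (R := α) n (indicatorSeries _ s) = 0 := by rw [coeff_indicator, if_neg h]

theorem constantCoeff_indicator (s : Set ℕ) [Semiring α] :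
    constantCoeff (R := α) (indicatorSeries _ s) = if 0 ∈ s then 1 else 0 :=
  rfl

theorem two_series (i : ℕ) [Semiring α] :
    1 + (X : PowerSeries α) ^ i.succ = indicatorSeries α {0, i.succ} := by
  ext n
  simp only [coeff_indicator, coeff_one, coeff_X_pow, Set.mem_insert_iff, Set.mem_singleton_iff,
    map_add]
  cases' n with d
  · simp [(Nat.succ_ne_zero i).symm]
  · simp [Nat.succ_ne_zero d]

theorem num_series' [Field α] (i : ℕ) :
    (1 - (X : PowerSeries α) ^ (i + 1))⁻¹ = indicatorSeries α {k | i + 1 ∣ k} := by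
  rw [PowerSeries.inv_eq_iff_mul_eq_one]
  · ext n
    cases n with
    | zero => simp [mul_sub, zero_pow, constantCoeff_indicator]
    | succ n =>
      simp only [coeff_one, if_false, mul_sub, mul_one, coeff_indicator,
        LinearMap.map_sub, reduceCtorEq]
      simp_rw [coeff_mul, coeff_X_pow, coeff_indicator, @boole_mul _ _ _ _]
      erw [@sum_ite _ _ _ _ _ (fun _ => Classical.propDecidable _), sum_ite]
      simp_rw [@filter_filter _ _ _ _ _, sum_const_zero, add_zero, sum_const, nsmul_eq_mul, mul_one,
        sub_eq_iff_eq_add, zero_add]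
      symm
      split_ifs with h
      · suffices #{a ∈ antidiagonal (n + 1) | i + 1 ∣ a.fst ∧ a.snd = i + 1} = 1 by
          simp only [Set.mem_setOf_eq]; convert congr_arg ((↑) : ℕ → α) this; norm_cast
        rw [card_eq_one]
        cases' h with p hp
        refine ⟨((i + 1) * (p - 1), i + 1), ?_⟩
        ext ⟨a₁, a₂⟩
        simp only [mem_filter, Prod.mk.injEq, HasAntidiagonal.mem_antidiagonal, mem_singleton]
        constructor
        · rintro ⟨a_left, ⟨a, rfl⟩, rfl⟩
          refine ⟨?_, rfl⟩
          rw [Nat.mul_sub_left_distrib, ← hp, ← a_left, mul_one, Nat.add_sub_cancel]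
        · rintro ⟨rfl, rfl⟩
          match p with
          | 0 => rw [mul_zero] at hp; cases hp
          | p + 1 => rw [hp]; simp [mul_add]
      · suffices #{a ∈ antidiagonal (n + 1) | i + 1 ∣ a.fst ∧ a.snd = i + 1} = 0 by
          simp only [Set.mem_setOf_eq]; convert congr_arg ((↑) : ℕ → α) this; norm_cast
        rw [card_eq_zero]
        apply eq_empty_of_forall_notMem
        simp only [Prod.forall, mem_filter, not_and, HasAntidiagonal.mem_antidiagonal]
        rintro _ h₁ h₂ ⟨a, rfl⟩ rfl
        apply h
        simp [← h₂]
  · simp [zero_pow]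

def mkOdd : ℕ ↪ ℕ :=
  ⟨fun i => 2 * i + 1, fun x y h => by linarith⟩

-- The main workhorse of the partition theorem proof.
theorem partialGF_prop (α : Type*) [CommSemiring α] (n : ℕ) (s : Finset ℕ) (hs : ∀ i ∈ s, 0 < i)
    (c : ℕ → Set ℕ) (hc : ∀ i, i ∉ s → 0 ∈ c i) :
    #{p : n.Partition | (∀ j, p.parts.count j ∈ c j) ∧ ∀ j ∈ p.parts, j ∈ s} =
      coeff (R := α) n (∏ i ∈ s, indicatorSeries α ((· * i) '' c i)) := by
  simp_rw [coeff_prod, coeff_indicator, prod_boole, sum_boole]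
  apply congr_arg
  simp only [mem_univ, forall_true_left, not_and, not_forall, exists_prop,
    Set.mem_image, not_exists]
  set φ : (a : Nat.Partition n) →
    a ∈ filter (fun p ↦ (∀ (j : ℕ), Multiset.count j p.parts ∈ c j) ∧ ∀ j ∈ p.parts, j ∈ s) univ →
    ℕ →₀ ℕ := fun p _ => {
      toFun := fun i => Multiset.count i p.parts • i
      support := Finset.filter (fun i => i ≠ 0) p.parts.toFinset
      mem_support_toFun := fun a => by
        simp only [smul_eq_mul, ne_eq, mul_eq_zero, Multiset.count_eq_zero]
        rw [not_or, not_not]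
        simp only [Multiset.mem_toFinset, not_not, mem_filter] }
  refine Finset.card_bij φ ?_ ?_ ?_
  · intro a ha
    simp only [φ, not_forall, not_exists, not_and, exists_prop, mem_filter]
    rw [mem_finsuppAntidiag]
    dsimp only [ne_eq, smul_eq_mul, id_eq, eq_mpr_eq_cast, le_eq_subset, Finsupp.coe_mk]
    simp only [mem_univ, forall_true_left, not_and, not_forall, exists_prop,
      mem_filter, true_and] at ha
    refine ⟨⟨?_, fun i ↦ ?_⟩, fun i _ ↦ ⟨a.parts.count i, ha.1 i, rfl⟩⟩
    · conv_rhs => simp [← a.parts_sum]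
      rw [sum_multiset_count_of_subset _ s]
      · simp only [smul_eq_mul]
      · intro i
        simp only [Multiset.mem_toFinset, not_not, mem_filter]
        apply ha.2
    · simp only [ne_eq, Multiset.mem_toFinset, not_not, mem_filter, and_imp]
      exact fun hi _ ↦ ha.2 i hi
  · intro p₁ hp₁ p₂ hp₂ h
    apply Nat.Partition.ext
    simp only [true_and, mem_univ, mem_filter] at hp₁ hp₂
    ext i
    simp only [φ, ne_eq, Multiset.mem_toFinset, not_not, smul_eq_mul, Finsupp.mk.injEq] at h
    by_cases hi : i = 0
    · rw [hi]
      rw [Multiset.count_eq_zero_of_notMem]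
      · rw [Multiset.count_eq_zero_of_notMem]
        intro a; exact Nat.lt_irrefl 0 (hs 0 (hp₂.2 0 a))
      intro a; exact Nat.lt_irrefl 0 (hs 0 (hp₁.2 0 a))
    · rw [← mul_left_inj' hi]
      rw [funext_iff] at h
      exact h.2 i
  · simp only [φ, mem_filter, mem_finsuppAntidiag, mem_univ, exists_prop, true_and, and_assoc]
    rintro f ⟨hf, hf₃, hf₄⟩
    have hf' : f ∈ finsuppAntidiag s n := mem_finsuppAntidiag.mpr ⟨hf, hf₃⟩
    simp only [mem_finsuppAntidiag] at hf'
    refine ⟨⟨∑ i ∈ s, Multiset.replicate (f i / i) i, ?_, ?_⟩, ?_, ?_, ?_⟩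
    · intro i hi
      simp only [exists_prop, Multiset.mem_sum, mem_map, Function.Embedding.coeFn_mk] at hi
      rcases hi with ⟨t, ht, z⟩
      apply hs
      rwa [Multiset.eq_of_mem_replicate z]
    · simp_rw [Multiset.sum_sum, Multiset.sum_replicate, Nat.nsmul_eq_mul]
      rw [← hf'.1]
      refine sum_congr rfl fun i hi => Nat.div_mul_cancel ?_
      rcases hf₄ i hi with ⟨w, _, hw₂⟩
      rw [← hw₂]
      exact dvd_mul_left _ _
    · intro i
      simp_rw [Multiset.count_sum', Multiset.count_replicate, sum_ite_eq']
      split_ifs with h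
      · rcases hf₄ i h with ⟨w, hw₁, hw₂⟩
        rwa [← hw₂, Nat.mul_div_cancel _ (hs i h)]
      · exact hc _ h
    · intro i hi
      rw [Multiset.mem_sum] at hi
      rcases hi with ⟨j, hj₁, hj₂⟩
      rwa [Multiset.eq_of_mem_replicate hj₂]
    · ext i
      simp_rw [Multiset.count_sum', Multiset.count_replicate, sum_ite_eq']
      simp only [ne_eq, Multiset.mem_toFinset, not_not, smul_eq_mul, ite_mul,
        zero_mul, Finsupp.coe_mk]
      split_ifs with h
      · apply Nat.div_mul_cancel
        rcases hf₄ i h with ⟨w, _, hw₂⟩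
        apply Dvd.intro_left _ hw₂
      · apply symm
        rw [← Finsupp.notMem_support_iff]
        exact notMem_mono hf'.2 h


/-- number of partitions of `n` -/
def pnum (n : ℕ) : ℕ := Fintype.card (Nat.Partition n)

theorem statistic_eq (n : ℕ) (s : Multiset ℕ) (h2 : ∀ j ∈ s, 2 ≤ j) (hn : ∀ j ∈ s, j ≤ n) :
    ∑ i ∈ Finset.Icc 1 n, i * (s.count (2 * i) + s.count (2 * i + 1)) =
      (s.map (· / 2)).sum := by
  induction s using Multiset.induction_on with
  | empty => simp
  | cons j s ih =>
    have hj2 : 2 ≤ j := h2 j (Multiset.mem_cons_self _ _)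
    have hjn : j ≤ n := hn j (Multiset.mem_cons_self _ _)
    have ih' := ih (fun x hx => h2 x (Multiset.mem_cons_of_mem hx))
      (fun x hx => hn x (Multiset.mem_cons_of_mem hx))
    simp only [Multiset.count_cons, Multiset.map_cons, Multiset.sum_cons]
    have hsplit : ∀ i ∈ Finset.Icc 1 n,
        i * ((s.count (2 * i) + if 2 * i = j then 1 else 0) +
          (s.count (2 * i + 1) + if 2 * i + 1 = j then 1 else 0)) =
        i * (s.count (2 * i) + s.count (2 * i + 1)) +
          (i * (if 2 * i = j then 1 else 0) + i * (if 2 * i + 1 = j then 1 else 0)) := by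
      intro i _; ring
    rw [Finset.sum_congr rfl hsplit, Finset.sum_add_distrib, ih']
    have hone : ∑ i ∈ Finset.Icc 1 n,
        (i * (if 2 * i = j then 1 else 0) + i * (if 2 * i + 1 = j then 1 else 0)) = j / 2 := by
      rw [Finset.sum_eq_single_of_mem (j / 2) (by rw [Finset.mem_Icc]; omega)]
      · split_ifs <;> omega
      · intro i _ hi
        split_ifs <;> omega
    omega

theorem parts_two_le {n : ℕ} (p : n.Partition) (h1 : 1 ∉ p.parts) :
    ∀ j ∈ p.parts, 2 ≤ j := fun j hj => by
  have := p.parts_pos hj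
  by_contra h'
  push_neg at h'
  interval_cases j
  exact absurd hj h1

theorem parts_le_n {n : ℕ} (p : n.Partition) : ∀ j ∈ p.parts, j ≤ n := fun j hj => by
  have := Multiset.single_le_sum (s := p.parts) (fun x _ => Nat.zero_le x) j hj
  rw [p.parts_sum] at this; exact this

theorem sum_le_three_halves (s : Multiset ℕ) (h2 : ∀ j ∈ s, 2 ≤ j) :
    s.sum ≤ 3 * (s.map (· / 2)).sum := by
  induction s using Multiset.induction_on with
  | empty => simp
  | cons j s ih =>
    have hj2 : 2 ≤ j := h2 j (Multiset.mem_cons_self _ _)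
    have ih' := ih (fun x hx => h2 x (Multiset.mem_cons_of_mem hx))
    simp only [Multiset.map_cons, Multiset.sum_cons]
    omega

theorem ctilde_eq_zero {n k : ℕ} (h : 3 * k < n) : ctilde n k = 0 := by
  rw [ctilde, Finset.card_eq_zero, Finset.filter_eq_empty_iff]
  rintro p - ⟨h1, hk⟩
  have h2 := parts_two_le p h1
  rw [statistic_eq n _ h2 (parts_le_n p)] at hk
  have h3 := sum_le_three_halves p.parts h2
  rw [p.parts_sum, hk] at h3
  omega


def fwd (x : Σ n : ℕ, n.Partition) : Σ ab : ℕ × ℕ, ab.1.Partition × ab.2.Partition :=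
  ⟨((((x.2.parts.filter (fun j => j % 2 = 0)).map (· / 2)).filter (0 < ·)).sum,
    (((x.2.parts.filter (fun j => ¬j % 2 = 0)).map (· / 2)).filter (0 < ·)).sum),
    ⟨((x.2.parts.filter (fun j => j % 2 = 0)).map (· / 2)).filter (0 < ·),
      fun hi => Multiset.of_mem_filter hi, rfl⟩,
    ⟨((x.2.parts.filter (fun j => ¬j % 2 = 0)).map (· / 2)).filter (0 < ·),
      fun hi => Multiset.of_mem_filter hi, rfl⟩⟩

def bwd (y : Σ ab : ℕ × ℕ, ab.1.Partition × ab.2.Partition) : Σ n : ℕ, n.Partition :=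
  ⟨(y.2.1.parts.map (fun x => 2 * x) + y.2.2.parts.map (fun x => 2 * x + 1)).sum,
    y.2.1.parts.map (fun x => 2 * x) + y.2.2.parts.map (fun x => 2 * x + 1),
    fun hi => by
      rcases Multiset.mem_add.1 hi with h | h <;>
      · obtain ⟨x, hx, rfl⟩ := Multiset.mem_map.1 h
        first
          | (have := y.2.1.parts_pos hx; omega)
          | (have := y.2.2.parts_pos hx; omega)
      , rfl⟩

theorem sigma_part_eq {x y : Σ n : ℕ, n.Partition} (h : x.2.parts = y.2.parts) : x = y := by
  obtain ⟨n, p⟩ := x; obtain ⟨m, q⟩ := y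
  simp only at h
  have hnm : n = m := by rw [← p.parts_sum, ← q.parts_sum, h]
  subst hnm
  exact congrArg (Sigma.mk n) (Nat.Partition.ext h)

theorem sigma_pair_eq {x y : Σ ab : ℕ × ℕ, ab.1.Partition × ab.2.Partition}
    (h1 : x.2.1.parts = y.2.1.parts) (h2 : x.2.2.parts = y.2.2.parts) : x = y := by
  obtain ⟨⟨a, b⟩, μ, ν⟩ := x; obtain ⟨⟨a', b'⟩, μ', ν'⟩ := y
  simp only at h1 h2
  have ha : a = a' := by
    rw [show a = μ.parts.sum from μ.parts_sum.symm, h1,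
      show μ'.parts.sum = a' from μ'.parts_sum]
  have hb : b = b' := by
    rw [show b = ν.parts.sum from ν.parts_sum.symm, h2,
      show ν'.parts.sum = b' from ν'.parts_sum]
  subst ha; subst hb
  rw [Nat.Partition.ext h1, Nat.Partition.ext h2]

theorem filter_pos_id (s : Multiset ℕ) (h2 : ∀ j ∈ s, 2 ≤ j) (pr : ℕ → Prop) [DecidablePred pr] :
    ((s.filter pr).map (· / 2)).filter (0 < ·) = (s.filter pr).map (· / 2) := by
  rw [Multiset.filter_eq_self]
  intro a ha
  obtain ⟨j, hj, rfl⟩ := Multiset.mem_map.1 ha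
  have := h2 j (Multiset.mem_of_mem_filter hj)
  omega

theorem recon_even (s : Multiset ℕ) :
    ((s.filter (fun j => j % 2 = 0)).map (· / 2)).map (fun x => 2 * x)
      = s.filter (fun j => j % 2 = 0) := by
  rw [Multiset.map_map]
  rw [Multiset.map_congr rfl fun x hx => ?_, Multiset.map_id]
  have := Multiset.of_mem_filter hx
  simp only [Function.comp_apply, id_eq]
  omega

theorem recon_odd (s : Multiset ℕ) :
    ((s.filter (fun j => ¬j % 2 = 0)).map (· / 2)).map (fun x => 2 * x + 1)
      = s.filter (fun j => ¬j % 2 = 0) := by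
  rw [Multiset.map_map]
  rw [Multiset.map_congr rfl fun x hx => ?_, Multiset.map_id]
  have := Multiset.of_mem_filter hx
  simp only [Function.comp_apply, id_eq]
  omega

theorem half_even (t : Multiset ℕ) : (t.map (fun x => 2 * x)).map (· / 2) = t := by
  rw [Multiset.map_map]
  rw [Multiset.map_congr rfl fun x _ => ?_, Multiset.map_id]
  simp only [Function.comp_apply, id_eq]
  omega

theorem half_odd (t : Multiset ℕ) : (t.map (fun x => 2 * x + 1)).map (· / 2) = t := by
  rw [Multiset.map_map]
  rw [Multiset.map_congr rfl fun x _ => ?_, Multiset.map_id]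
  simp only [Function.comp_apply, id_eq]
  omega

theorem step4 (k : ℕ) : ∑ n ∈ range (3 * k + 1), ctilde n k
    = ∑ ab ∈ Finset.HasAntidiagonal.antidiagonal k, pnum ab.1 * pnum ab.2 := by
  have hL : ∑ n ∈ range (3 * k + 1), ctilde n k =
      ((range (3 * k + 1)).sigma (fun n => univ.filter (fun p : n.Partition =>
        1 ∉ p.parts ∧ ∑ i ∈ Finset.Icc 1 n,
          i * (p.parts.count (2 * i) + p.parts.count (2 * i + 1)) = k))).card := by
    rw [Finset.card_sigma]
    exact Finset.sum_congr rfl fun n _ => by rw [ctilde]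
  have hR : ∑ ab ∈ Finset.HasAntidiagonal.antidiagonal k, pnum ab.1 * pnum ab.2 =
      ((Finset.HasAntidiagonal.antidiagonal k).sigma
        (fun ab => (univ : Finset (ab.1.Partition × ab.2.Partition)))).card := by
    rw [Finset.card_sigma]
    exact Finset.sum_congr rfl fun ab _ => by
      rw [Finset.card_univ, Fintype.card_prod, pnum, pnum]
  rw [hL, hR]
  refine Finset.card_nbij' fwd bwd ?_ ?_ ?_ ?_
  · rintro ⟨n, p⟩ hx
    rw [Finset.mem_coe, Finset.mem_sigma, Finset.mem_range, Nat.lt_succ_iff] at hx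
    obtain ⟨hn, hp⟩ := hx
    rw [Finset.mem_filter] at hp
    obtain ⟨-, h1, hk⟩ := hp
    have h2 := parts_two_le p h1
    rw [Finset.mem_coe, Finset.mem_sigma]
    refine ⟨?_, Finset.mem_univ _⟩
    rw [Finset.HasAntidiagonal.mem_antidiagonal]
    show ((((p.parts.filter (fun j => j % 2 = 0)).map (· / 2)).filter (0 < ·)).sum +
      (((p.parts.filter (fun j => ¬j % 2 = 0)).map (· / 2)).filter (0 < ·)).sum) = k
    rw [filter_pos_id _ h2, filter_pos_id _ h2, ← Multiset.sum_add, ← Multiset.map_add,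
      Multiset.filter_add_not]
    rw [← statistic_eq n _ h2 (parts_le_n p)]
    exact hk
  · rintro ⟨⟨a, b⟩, μ, ν⟩ hy
    rw [Finset.mem_coe, Finset.mem_sigma, Finset.HasAntidiagonal.mem_antidiagonal] at hy
    obtain ⟨hab, -⟩ := hy
    have hab' : a + b = k := hab
    have h2 : ∀ j ∈ μ.parts.map (fun x => 2 * x) + ν.parts.map (fun x => 2 * x + 1), 2 ≤ j := by
      intro j hj
      rcases Multiset.mem_add.1 hj with h | h <;>
      · obtain ⟨x, hx, rfl⟩ := Multiset.mem_map.1 h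
        first
          | (have := μ.parts_pos hx; omega)
          | (have := ν.parts_pos hx; omega)
    have hhalf : ((μ.parts.map (fun x => 2 * x) + ν.parts.map (fun x => 2 * x + 1)).map
        (· / 2)).sum = k := by
      rw [Multiset.map_add, half_even, half_odd, Multiset.sum_add, μ.parts_sum, ν.parts_sum]
      exact hab'
    have hle : ∀ j ∈ μ.parts.map (fun x => 2 * x) + ν.parts.map (fun x => 2 * x + 1),
        j ≤ (μ.parts.map (fun x => 2 * x) + ν.parts.map (fun x => 2 * x + 1)).sum :=
      fun j hj => Multiset.single_le_sum (fun x _ => Nat.zero_le x) j hj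
    rw [Finset.mem_coe, Finset.mem_sigma]
    constructor
    · rw [Finset.mem_range, Nat.lt_succ_iff]
      show (μ.parts.map (fun x => 2 * x) + ν.parts.map (fun x => 2 * x + 1)).sum ≤ 3 * k
      calc (μ.parts.map (fun x => 2 * x) + ν.parts.map (fun x => 2 * x + 1)).sum
          ≤ 3 * ((μ.parts.map (fun x => 2 * x) + ν.parts.map (fun x => 2 * x + 1)).map
            (· / 2)).sum := sum_le_three_halves _ h2
        _ = 3 * k := by rw [hhalf]
    · rw [Finset.mem_filter]
      refine ⟨Finset.mem_univ _, ?_, ?_⟩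
      · show 1 ∉ μ.parts.map (fun x => 2 * x) + ν.parts.map (fun x => 2 * x + 1)
        intro hmem
        have := h2 1 hmem
        omega
      · show ∑ i ∈ Finset.Icc 1
            ((μ.parts.map (fun x => 2 * x) + ν.parts.map (fun x => 2 * x + 1)).sum), i *
          ((μ.parts.map (fun x => 2 * x) + ν.parts.map (fun x => 2 * x + 1)).count (2 * i) +
            (μ.parts.map (fun x => 2 * x) + ν.parts.map (fun x => 2 * x + 1)).count (2 * i + 1))
          = k
        rw [statistic_eq _ _ h2 hle]
        exact hhalf
  · rintro ⟨n, p⟩ hx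
    rw [Finset.mem_coe, Finset.mem_sigma, Finset.mem_filter] at hx
    obtain ⟨-, -, h1, -⟩ := hx
    have h2 := parts_two_le p h1
    apply sigma_part_eq
    show (((p.parts.filter (fun j => j % 2 = 0)).map (· / 2)).filter (0 < ·)).map (fun x => 2 * x)
        + (((p.parts.filter (fun j => ¬j % 2 = 0)).map (· / 2)).filter (0 < ·)).map
          (fun x => 2 * x + 1) = p.parts
    rw [filter_pos_id _ h2, filter_pos_id _ h2, recon_even, recon_odd, Multiset.filter_add_not]
  · rintro ⟨⟨a, b⟩, μ, ν⟩ hy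
    have e1 : (μ.parts.map (fun x => 2 * x)).filter (fun j => j % 2 = 0)
        = μ.parts.map (fun x => 2 * x) :=
      Multiset.filter_eq_self.2 (fun c hc => by
        obtain ⟨x, hx, rfl⟩ := Multiset.mem_map.1 hc; omega)
    have e2 : (ν.parts.map (fun x => 2 * x + 1)).filter (fun j => j % 2 = 0)
        = 0 :=
      Multiset.filter_eq_nil.2 (fun c hc => by
        obtain ⟨x, hx, rfl⟩ := Multiset.mem_map.1 hc; omega)
    have e3 : (μ.parts.map (fun x => 2 * x)).filter (fun j => ¬j % 2 = 0)
        = 0 :=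
      Multiset.filter_eq_nil.2 (fun c hc => by
        obtain ⟨x, hx, rfl⟩ := Multiset.mem_map.1 hc; omega)
    have e4 : (ν.parts.map (fun x => 2 * x + 1)).filter (fun j => ¬j % 2 = 0)
        = ν.parts.map (fun x => 2 * x + 1) :=
      Multiset.filter_eq_self.2 (fun c hc => by
        obtain ⟨x, hx, rfl⟩ := Multiset.mem_map.1 hc; omega)
    have e5 : μ.parts.filter (0 < ·) = μ.parts :=
      Multiset.filter_eq_self.2 (fun c hc => μ.parts_pos hc)
    have e6 : ν.parts.filter (0 < ·) = ν.parts :=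
      Multiset.filter_eq_self.2 (fun c hc => ν.parts_pos hc)
    apply sigma_pair_eq
    · show ((((μ.parts.map (fun x => 2 * x) + ν.parts.map (fun x => 2 * x + 1)).filter
        (fun j => j % 2 = 0)).map (· / 2)).filter (0 < ·)) = μ.parts
      rw [Multiset.filter_add, e1, e2, add_zero, half_even, e5]
    · show ((((μ.parts.map (fun x => 2 * x) + ν.parts.map (fun x => 2 * x + 1)).filter
        (fun j => ¬j % 2 = 0)).map (· / 2)).filter (0 < ·)) = ν.parts
      rw [Multiset.filter_add, e3, e4, zero_add, half_odd, e6]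

/-- `cc` as the Cauchy square of the partition numbers. -/
theorem cc_eq (k : ℕ) : cc k = ∑ ab ∈ Finset.HasAntidiagonal.antidiagonal k, pnum ab.1 * pnum ab.2 := by
  have h0 : cc k = ∑ n ∈ range (3 * k + 1), ctilde n k := by
    rw [cc]
    apply tsum_eq_sum
    intro n hn
    exact ctilde_eq_zero (by simpa [Nat.lt_succ_iff] using hn)
  rw [h0, step4]

theorem partialAllGF_prop (n m : ℕ) :
    (#{p : n.Partition | ∀ j ∈ p.parts, j ∈ (range m).map ⟨Nat.succ, Nat.succ_injective⟩} : ℚ) =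
      coeff (R := ℚ) n (∏ i ∈ range m, (1 - (X : PowerSeries ℚ) ^ (i + 1))⁻¹) := by
  convert partialGF_prop ℚ n
    ((range m).map ⟨Nat.succ, Nat.succ_injective⟩) _ (fun _ => Set.univ) (fun _ _ => trivial)
    using 2
  · congr
  · simp only [true_and, forall_const, Set.mem_univ]
  · rw [Finset.prod_map]
    simp_rw [num_series']
    congr! 2 with x
    ext k
    constructor
    · rintro ⟨p, rfl⟩
      exact ⟨p, ⟨⟩, mul_comm _ _⟩
    · rintro ⟨a_w, -, rfl⟩
      exact Dvd.intro_left a_w rfl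
  · simp only [mem_map, Function.Embedding.coeFn_mk]
    rintro i ⟨_, _, rfl⟩
    apply Nat.succ_pos

theorem allGF_prop (n m : ℕ) (h : n ≤ m) :
    ((pnum n : ℚ)) = coeff (R := ℚ) n (∏ i ∈ range (m + 1), (1 - (X : PowerSeries ℚ) ^ (i + 1))⁻¹) := by
  rw [← partialAllGF_prop n (m + 1)]
  congr 1
  rw [pnum, ← Finset.card_univ]
  congr 1
  rw [eq_comm, Finset.filter_eq_self]
  intro p _ j hj
  have hle : j ≤ n := parts_le_n p j hj
  have hpos : 0 < j := p.parts_pos hj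
  simp only [mem_map, mem_range, Function.Embedding.coeFn_mk]
  exact ⟨j - 1, by omega, by omega⟩

theorem coeff_pnum_prod (m k : ℕ) (hk : k ≤ m) :
    coeff (R := ℚ) k ((PowerSeries.mk fun n => (pnum n : ℚ)) *
      ∏ j ∈ range (m + 1), (1 - (X : PowerSeries ℚ) ^ (j + 1))) =
      if k = 0 then 1 else 0 := by
  have hP : (∏ j ∈ range (m + 1), (1 - (X : PowerSeries ℚ) ^ (j + 1))⁻¹) *
      ∏ j ∈ range (m + 1), (1 - (X : PowerSeries ℚ) ^ (j + 1)) = 1 := by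
    rw [← Finset.prod_mul_distrib, Finset.prod_eq_one]
    intro j _
    refine PowerSeries.inv_mul_cancel _ ?_
    simp [zero_pow]
  have hcoeff : ∀ t, t ≤ m → coeff (R := ℚ) t (PowerSeries.mk fun n => (pnum n : ℚ)) =
      coeff (R := ℚ) t (∏ j ∈ range (m + 1), (1 - (X : PowerSeries ℚ) ^ (j + 1))⁻¹) := by
    intro t ht
    rw [coeff_mk, allGF_prop t m ht]
  calc coeff (R := ℚ) k ((PowerSeries.mk fun n => (pnum n : ℚ)) *
        ∏ j ∈ range (m + 1), (1 - (X : PowerSeries ℚ) ^ (j + 1)))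
      = coeff (R := ℚ) k ((∏ j ∈ range (m + 1), (1 - (X : PowerSeries ℚ) ^ (j + 1))⁻¹) *
        ∏ j ∈ range (m + 1), (1 - (X : PowerSeries ℚ) ^ (j + 1))) := by
        rw [coeff_mul, coeff_mul]
        refine Finset.sum_congr rfl fun ab hab => ?_
        rw [Finset.HasAntidiagonal.mem_antidiagonal] at hab
        rw [hcoeff ab.1 (by omega)]
    _ = coeff (R := ℚ) k 1 := by rw [hP]
    _ = if k = 0 then 1 else 0 := by rw [coeff_one]

theorem c_gf_q (m : ℕ) :
    coeff (R := ℚ) m ((PowerSeries.mk fun k => (cc k : ℚ)) *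
      ∏ j ∈ range (m + 1), (1 - (X : PowerSeries ℚ) ^ (j + 1)) ^ 2)
      = if m = 0 then 1 else 0 := by
  have hcc : (PowerSeries.mk fun k => (cc k : ℚ)) =
      (PowerSeries.mk fun n => (pnum n : ℚ)) ^ 2 := by
    ext t
    rw [coeff_mk, sq, coeff_mul, cc_eq]
    push_cast
    exact Finset.sum_congr rfl fun ab _ => by rw [coeff_mk, coeff_mk]
  rw [hcc, Finset.prod_pow, ← mul_pow, sq, coeff_mul]
  have hg : ∀ t, t ≤ m → coeff (R := ℚ) t ((PowerSeries.mk fun n => (pnum n : ℚ)) *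
      ∏ j ∈ range (m + 1), (1 - (X : PowerSeries ℚ) ^ (j + 1))) = if t = 0 then 1 else 0 :=
    coeff_pnum_prod m
  rcases Nat.eq_zero_or_pos m with rfl | hm
  · simp only [Finset.Nat.antidiagonal_zero, Finset.sum_singleton]
    rw [hg 0 le_rfl]
    norm_num
  · rw [if_neg hm.ne', Finset.sum_eq_zero]
    rintro ⟨x, y⟩ hxy
    rw [Finset.HasAntidiagonal.mem_antidiagonal] at hxy
    rw [hg x (by omega), hg y (by omega)]
    split_ifs <;> first | (exfalso; omega) | ring

end
end CGF

/-- `Σ_k c(k) x^k = 1/(x;x)_∞²`: for each `m`, the coefficient of `x^m` in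
`(Σ_k c(k) x^k) · Π_{j≤m} (1 - x^{j+1})²` is `1` if `m = 0` and `0` otherwise, i.e. `c(k)`
counts two-colored partitions of `k`. -/
theorem c_gf :
    ∀ m : ℕ, PowerSeries.coeff (R := ℤ) m
      ((PowerSeries.mk fun k => (cc k : ℤ)) *
        ∏ j ∈ range (m + 1), (1 - PowerSeries.X ^ (j + 1)) ^ 2)
      = if m = 0 then 1 else 0 := by
  intro m
  have hmap : PowerSeries.map (Int.castRingHom ℚ)
      ((PowerSeries.mk fun k => (cc k : ℤ)) *
        ∏ j ∈ range (m + 1), (1 - PowerSeries.X ^ (j + 1)) ^ 2)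
      = (PowerSeries.mk fun k => (cc k : ℚ)) *
        ∏ j ∈ range (m + 1), (1 - PowerSeries.X ^ (j + 1)) ^ 2 := by
    rw [map_mul, map_prod]
    have h1 : PowerSeries.map (Int.castRingHom ℚ) (PowerSeries.mk fun k => (cc k : ℤ))
        = PowerSeries.mk fun k => (cc k : ℚ) := by
      ext t
      simp [PowerSeries.coeff_map]
    rw [h1]
    refine congrArg _ (Finset.prod_congr rfl fun j _ => ?_)
    simp
  have h := CGF.c_gf_q m
  rw [← hmap, PowerSeries.coeff_map] at h
  simp only [Int.coe_castRingHom] at h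
  split_ifs at h ⊢ <;> exact_mod_cast h
end
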